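/- arXiv:1501.05744 — 9 statements merged into one kernel-verified Lean document; each statement's English description precedes it below -/
import Mathlib

section
/- Theorem 2, (1) ⇒ (2): if Π ∈ 𝓜ᵐᵐ is an optimal measurement (f(Π) ≥ f(Π') for every Π' ∈ 𝓜ᵐᵐ) and moreover the dual optimum is attained at some dual feasible pair whose value equals f(Π), then there exist a Hermitian matrix X and λ : Fin J → ℝ with λ j ≥ 0 such that: X - z m λ is positive semidefinite for all m ∈ Fin M; (X - z m λ) * Π m = 0 for all m ∈ Fin M; and λ j * (b j - ∑ m, Re(Tr(a j m * Π m))) = 0 for all j ∈ Fin J. -/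
open Matrix Complex
open scoped ComplexOrder

noncomputable section

section sqrtPort
open scoped MatrixOrder

/-- Square root of a positive semidefinite matrix (port helper). -/
def Matrix.PosSemidef.sqrt {n : Type*} [Fintype n] [DecidableEq n] {A : Matrix n n ℂ}
    (_hA : A.PosSemidef) : Matrix n n ℂ := CFC.sqrt A

lemma Matrix.PosSemidef.posSemidef_sqrt {n : Type*} [Fintype n] [DecidableEq n]
    {A : Matrix n n ℂ} (hA : A.PosSemidef) : hA.sqrt.PosSemidef :=
  (CFC.sqrt_nonneg A).posSemidef

lemma Matrix.PosSemidef.sqrt_mul_self {n : Type*} [Fintype n] [DecidableEq n]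
    {A : Matrix n n ℂ} (hA : A.PosSemidef) : hA.sqrt * hA.sqrt = A :=
  CFC.sqrt_mul_sqrt_self A hA.nonneg

end sqrtPort

lemma trace_eq_sum_normSq {n : Type*} [Fintype n] [DecidableEq n]
    {A B : Matrix n n ℂ} (hA : A.PosSemidef) (hB : B.PosSemidef) :
    ((A * B).trace).re = ∑ i, ∑ j, Complex.normSq ((hB.sqrt * hA.sqrt) i j) := by
  set S := hA.sqrt with hSdef
  set T := hB.sqrt with hTdef
  have hS : Sᴴ = S := hA.posSemidef_sqrt.1
  have hT : Tᴴ = T := hB.posSemidef_sqrt.1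
  have h : (A * B).trace = ((T * S)ᴴ * (T * S)).trace := by
    conv_lhs => rw [← hA.sqrt_mul_self, ← hB.sqrt_mul_self, ← hSdef, ← hTdef]
    rw [conjTranspose_mul, hS, hT]
    rw [show S * S * (T * T) = S * (S * T * T) by noncomm_ring]
    rw [trace_mul_comm, Matrix.mul_assoc, Matrix.mul_assoc]
  rw [h]
  simp only [Matrix.trace, Matrix.diag, Matrix.mul_apply, conjTranspose_apply,
    Complex.re_sum]
  rw [Finset.sum_comm]
  refine Finset.sum_congr rfl fun y _ => Finset.sum_congr rfl fun x _ => ?_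
  rw [show (star (∑ j : n, T y j * S j x) : ℂ) = (starRingEnd ℂ) (∑ j : n, T y j * S j x) from rfl,
    ← Complex.normSq_eq_conj_mul_self, Complex.ofReal_re]

lemma mul_eq_zero_of_trace_re_eq_zero {n : Type*} [Fintype n] [DecidableEq n]
    {A B : Matrix n n ℂ} (hA : A.PosSemidef) (hB : B.PosSemidef)
    (h : ((A * B).trace).re = 0) : A * B = 0 := by
  rw [trace_eq_sum_normSq hA hB] at h
  have hTS : hB.sqrt * hA.sqrt = 0 := by
    ext i j
    have := (Finset.sum_eq_zero_iff_of_nonneg (fun i _ => Finset.sum_nonneg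
      (fun j _ => Complex.normSq_nonneg _))).mp h i (Finset.mem_univ i)
    have := (Finset.sum_eq_zero_iff_of_nonneg (fun j _ => Complex.normSq_nonneg _)).mp
      this j (Finset.mem_univ j)
    simpa using Complex.normSq_eq_zero.mp this
  have hST : hA.sqrt * hB.sqrt = 0 := by
    have := congrArg conjTranspose hTS
    rwa [conjTranspose_mul, hA.posSemidef_sqrt.1, hB.posSemidef_sqrt.1,
      conjTranspose_zero] at this
  calc A * B = hA.sqrt * hA.sqrt * (hB.sqrt * hB.sqrt) := by
        rw [hA.sqrt_mul_self, hB.sqrt_mul_self]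
    _ = hA.sqrt * (hA.sqrt * hB.sqrt) * hB.sqrt := by noncomm_ring
    _ = 0 := by rw [hST]; simp

lemma trace_re_nonneg {n : Type*} [Fintype n] [DecidableEq n]
    {A B : Matrix n n ℂ} (hA : A.PosSemidef) (hB : B.PosSemidef) :
    0 ≤ ((A * B).trace).re := by
  rw [trace_eq_sum_normSq hA hB]
  exact Finset.sum_nonneg fun i _ => Finset.sum_nonneg fun j _ => Complex.normSq_nonneg _


/-- A POVM with `M` outcomes: each detection operator is positive semidefinite
and they sum to the identity. -/
def IsPOVM {n : Type*} [Fintype n] [DecidableEq n] {M : ℕ}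
    (P : Fin M → Matrix n n ℂ) : Prop :=
  (∀ m, (P m).PosSemidef) ∧ ∑ m, P m = 1

/-- Membership in the feasible set `𝓜ᵐᵐ`. -/
def Feasible {n : Type*} [Fintype n] [DecidableEq n] {M J : ℕ}
    (a : Fin J → Fin M → Matrix n n ℂ) (b : Fin J → ℝ)
    (P : Fin M → Matrix n n ℂ) : Prop :=
  IsPOVM P ∧ ∀ j, ∑ m, ((a j m * P m).trace).re ≤ b j

/-- The primal objective `f(Π)`. -/
def primalObj {n : Type*} [Fintype n] {M : ℕ}
    (c : Fin M → Matrix n n ℂ) (P : Fin M → Matrix n n ℂ) : ℝ :=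
  ∑ m, ((c m * P m).trace).re

/-- The operator `z m λ = c m - ∑ j, λ j • a j m`. -/
def zOp {M J : ℕ} {n : Type*}
    (c : Fin M → Matrix n n ℂ) (a : Fin J → Fin M → Matrix n n ℂ)
    (lam : Fin J → ℝ) (m : Fin M) : Matrix n n ℂ :=
  c m - ∑ j, (lam j : ℂ) • a j m

/-- The dual objective `s(X, λ)`. -/
def dualObj {n : Type*} [Fintype n] {J : ℕ}
    (b : Fin J → ℝ) (X : Matrix n n ℂ) (lam : Fin J → ℝ) : ℝ :=
  X.trace.re + ∑ j, lam j * b j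

/-- Dual feasibility: `X` Hermitian, `λ ≥ 0`, and `X - z m λ` positive semidefinite. -/
def DualFeasible {n : Type*} [Fintype n] {M J : ℕ}
    (c : Fin M → Matrix n n ℂ) (a : Fin J → Fin M → Matrix n n ℂ)
    (X : Matrix n n ℂ) (lam : Fin J → ℝ) : Prop :=
  X.IsHermitian ∧ (∀ j, 0 ≤ lam j) ∧ ∀ m, (X - zOp c a lam m).PosSemidef

/-- Theorem 2, (1) ⇒ (2): an optimal measurement, together with attainment of the dual
optimum at the primal optimal value, yields a dual feasible pair satisfying the
complementary slackness conditions. -/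
theorem optimal_implies_slackness {n : Type*} [Fintype n] [DecidableEq n] [Nonempty n]
    {M J : ℕ}
    (c : Fin M → Matrix n n ℂ) (a : Fin J → Fin M → Matrix n n ℂ) (b : Fin J → ℝ)
    (hc : ∀ m, (c m).IsHermitian) (ha : ∀ j m, (a j m).IsHermitian)
    (P : Fin M → Matrix n n ℂ) (hP : Feasible a b P)
    (hopt : ∀ P', Feasible a b P' → primalObj c P' ≤ primalObj c P)
    (hdualatt : ∃ X lam, DualFeasible c a X lam ∧ dualObj b X lam = primalObj c P) :
    ∃ (X : Matrix n n ℂ) (lam : Fin J → ℝ),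
      X.IsHermitian ∧ (∀ j, 0 ≤ lam j) ∧
      (∀ m, (X - zOp c a lam m).PosSemidef) ∧
      (∀ m, (X - zOp c a lam m) * P m = 0) ∧
      (∀ j, lam j * (b j - ∑ m, ((a j m * P m).trace).re) = 0) := by
  obtain ⟨X, lam, ⟨hXH, hlam, hpsd⟩, hval⟩ := hdualatt
  obtain ⟨⟨hPpsd, hPsum⟩, hPfeas⟩ := hP
  -- expand each slack trace term
  have hS1 : ∀ m, (((X - zOp c a lam m) * P m).trace).re
      = ((X * P m).trace).re - ((c m * P m).trace).re
        + ∑ j, lam j * ((a j m * P m).trace).re := by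
    intro m
    have : (X - zOp c a lam m) * P m
        = X * P m - c m * P m + ∑ j, (lam j : ℂ) • (a j m * P m) := by
      simp [zOp, sub_mul, Finset.sum_mul, smul_mul_assoc]
      noncomm_ring
    rw [this, Matrix.trace_add, Matrix.trace_sub, Matrix.trace_sum]
    simp [Complex.add_re, Complex.sub_re, Complex.re_sum, Matrix.trace_smul,
      smul_eq_mul, Complex.re_ofReal_mul]
  have htrX : ∑ m, ((X * P m).trace).re = X.trace.re := by
    have : ∑ m, (X * P m).trace = X.trace := by
      rw [← Matrix.trace_sum, ← Finset.mul_sum, hPsum, mul_one]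
    rw [← Complex.re_sum, this]
  set S2 : Fin J → ℝ := fun j => lam j * (b j - ∑ m, ((a j m * P m).trace).re) with hS2def
  have hS2nonneg : ∀ j, 0 ≤ S2 j := fun j =>
    mul_nonneg (hlam j) (sub_nonneg.mpr (hPfeas j))
  have hS1nonneg : ∀ m, 0 ≤ (((X - zOp c a lam m) * P m).trace).re :=
    fun m => trace_re_nonneg (hpsd m) (hPpsd m)
  have hkey : (∑ m, (((X - zOp c a lam m) * P m).trace).re) + ∑ j, S2 j = 0 := by
    have h1 : ∑ m, (((X - zOp c a lam m) * P m).trace).re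
        = X.trace.re - primalObj c P + ∑ j, ∑ m, lam j * ((a j m * P m).trace).re := by
      rw [Finset.sum_congr rfl fun m _ => hS1 m]
      rw [Finset.sum_add_distrib, Finset.sum_sub_distrib, htrX, Finset.sum_comm]
      rfl
    have h2 : ∑ j, S2 j
        = ∑ j, lam j * b j - ∑ j, ∑ m, lam j * ((a j m * P m).trace).re := by
      simp [hS2def, mul_sub, Finset.sum_sub_distrib, Finset.mul_sum]
    have h3 : X.trace.re + ∑ j, lam j * b j = primalObj c P := hval
    rw [h1, h2]; linarith
  have hsum1 : ∑ m, (((X - zOp c a lam m) * P m).trace).re = 0 := by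
    have := Finset.sum_nonneg (fun j (_ : j ∈ Finset.univ) => hS2nonneg j)
    have := Finset.sum_nonneg (fun m (_ : m ∈ Finset.univ) => hS1nonneg m)
    linarith
  have hsum2 : ∑ j, S2 j = 0 := by linarith
  refine ⟨X, lam, hXH, hlam, hpsd, fun m => ?_, fun j => ?_⟩
  · exact mul_eq_zero_of_trace_re_eq_zero (hpsd m) (hPpsd m)
      ((Finset.sum_eq_zero_iff_of_nonneg fun m _ => hS1nonneg m).mp hsum1 m
        (Finset.mem_univ m))
  · exact (Finset.sum_eq_zero_iff_of_nonneg fun j _ => hS2nonneg j).mp hsum2 j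
      (Finset.mem_univ j)
end
end

section
/- Theorem 2, (2) ⇒ (3): let Π ∈ 𝓜ᵐᵐ, and suppose there exist a Hermitian matrix X and λ : Fin J → ℝ with λ j ≥ 0 such that X - z m λ is positive semidefinite for all m, (X - z m λ) * Π m = 0 for all m, and λ j * (b j - ∑ m, Re(Tr(a j m * Π m))) = 0 for all j. Then for the same λ: (∑_{n'<M} z n' λ * Π n') - z m λ is positive semidefinite for all m ∈ Fin M, and λ j * (b j - ∑ m, Re(Tr(a j m * Π m))) = 0 for all j ∈ Fin J. -/
open Matrix Complex
open scoped ComplexOrder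

noncomputable section

/-- Theorem 2, (2) ⇒ (3). -/
theorem slackness_implies_X_form {n : Type*} [Fintype n] [DecidableEq n] [Nonempty n]
    {M J : ℕ}
    (c : Fin M → Matrix n n ℂ) (a : Fin J → Fin M → Matrix n n ℂ) (b : Fin J → ℝ)
    (hc : ∀ m, (c m).IsHermitian) (ha : ∀ j m, (a j m).IsHermitian)
    (P : Fin M → Matrix n n ℂ) (hP : Feasible a b P)
    (X : Matrix n n ℂ) (lam : Fin J → ℝ)
    (hX : X.IsHermitian) (hlam : ∀ j, 0 ≤ lam j)
    (hpsd : ∀ m, (X - zOp c a lam m).PosSemidef)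
    (horth : ∀ m, (X - zOp c a lam m) * P m = 0)
    (hslack : ∀ j, lam j * (b j - ∑ m, ((a j m * P m).trace).re) = 0) :
    (∀ m, ((∑ n', zOp c a lam n' * P n') - zOp c a lam m).PosSemidef) ∧
    (∀ j, lam j * (b j - ∑ m, ((a j m * P m).trace).re) = 0) := by
  have hXsum : (∑ n', zOp c a lam n' * P n') = X := by
    have h1 : ∀ m, zOp c a lam m * P m = X * P m := by
      intro m
      have := horth m
      rw [Matrix.sub_mul, sub_eq_zero] at this
      exact this.symm
    calc (∑ n', zOp c a lam n' * P n') = ∑ n', X * P n' := by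
          exact Finset.sum_congr rfl (fun m _ => h1 m)
      _ = X * ∑ n', P n' := by rw [Finset.mul_sum]
      _ = X := by rw [hP.1.2, mul_one]
  exact ⟨fun m => hXsum ▸ hpsd m, hslack⟩
end
end

section
/- Minimax theorem for the generalized problem (Eq. (16)): if 𝓜ᵐᵐ is nonempty, then there exists a pair (μ*, Π*) with μ* in the probability simplex P and Π* ∈ 𝓜ᵐᵐ that is a saddle point of F, i.e. F(μ*, Π) ≤ F(μ*, Π*) ≤ F(μ, Π*) for all μ ∈ P and all Π ∈ 𝓜ᵐᵐ; consequently max_{Π ∈ 𝓜ᵐᵐ} min_{μ ∈ P} F(μ, Π) = F(μ*, Π*) = min_{μ ∈ P} max_{Π ∈ 𝓜ᵐᵐ} F(μ, Π). -/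
open Matrix Complex
open scoped ComplexOrder

noncomputable section

/-- The probability simplex `P` over `Fin K`. -/
def Simplex {K : ℕ} (μ : Fin K → ℝ) : Prop :=
  (∀ k, 0 ≤ μ k) ∧ ∑ k, μ k = 1

/-- The functions `f k (Π) = ∑ m, Re(Tr(c k m * Π m)) + d k`. -/
def fObj {n : Type*} [Fintype n] {M K : ℕ}
    (c : Fin K → Fin M → Matrix n n ℂ) (d : Fin K → ℝ)
    (k : Fin K) (P : Fin M → Matrix n n ℂ) : ℝ :=
  ∑ m, ((c k m * P m).trace).re + d k

/-- The payoff function `F(μ, Π) = ∑ k, μ k * f k (Π)`. -/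
def FObj {n : Type*} [Fintype n] {M K : ℕ}
    (c : Fin K → Fin M → Matrix n n ℂ) (d : Fin K → ℝ)
    (μ : Fin K → ℝ) (P : Fin M → Matrix n n ℂ) : ℝ :=
  ∑ k, μ k * fObj c d k P

/-- `F⋆(μ)`: the supremum of `F(μ, Π)` over feasible `Π`. -/
def Fstar {n : Type*} [Fintype n] [DecidableEq n] {M J K : ℕ}
    (a : Fin J → Fin M → Matrix n n ℂ) (b : Fin J → ℝ)
    (c : Fin K → Fin M → Matrix n n ℂ) (d : Fin K → ℝ)
    (μ : Fin K → ℝ) : ℝ :=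
  sSup ((fun P => FObj c d μ P) '' {P | Feasible a b P})

/-- A minimax solution (saddle point of `F`). -/
def IsMinimaxSol {n : Type*} [Fintype n] [DecidableEq n] {M J K : ℕ}
    (a : Fin J → Fin M → Matrix n n ℂ) (b : Fin J → ℝ)
    (c : Fin K → Fin M → Matrix n n ℂ) (d : Fin K → ℝ)
    (μs : Fin K → ℝ) (Ps : Fin M → Matrix n n ℂ) : Prop :=
  Simplex μs ∧ Feasible a b Ps ∧
    (∀ P, Feasible a b P → FObj c d μs P ≤ FObj c d μs Ps) ∧
    (∀ μ, Simplex μ → FObj c d μs Ps ≤ FObj c d μ Ps)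

section MXAux

open Matrix Complex
open scoped ComplexOrder

namespace MX

variable {n : Type*} [Fintype n] [DecidableEq n] {M J K : ℕ}

omit [DecidableEq n] in
lemma psd_smul {Q : Matrix n n ℂ} (hQ : Q.PosSemidef) {t : ℝ} (ht : 0 ≤ t) :
    (t • Q).PosSemidef := by
  refine .of_dotProduct_mulVec_nonneg ?_ ?_
  · show _ = _
    rw [conjTranspose_smul, star_trivial, hQ.1.eq]
  · intro x
    rw [smul_mulVec, dotProduct_smul]
    exact smul_nonneg (by exact_mod_cast ht) (hQ.dotProduct_mulVec_nonneg x)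

lemma psd_diag_nonneg {P : Matrix n n ℂ} (hP : P.PosSemidef) (i : n) : 0 ≤ P i i := by
  have := hP.dotProduct_mulVec_nonneg (Pi.single i 1)
  simpa [dotProduct, mulVec, Pi.single_apply] using this

lemma diag_re_le_trace {P : Matrix n n ℂ} (hP : P.PosSemidef) (i : n) :
    (P i i).re ≤ P.trace.re := by
  rw [Matrix.trace, Complex.re_sum]
  exact Finset.single_le_sum (f := fun j => (P.diag j).re)
    (fun j _ => ((Complex.le_def.mp (psd_diag_nonneg hP j)).1)) (Finset.mem_univ i)

open scoped MatrixOrder in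
lemma entry_norm_le_trace {P : Matrix n n ℂ}
    (hP : P.PosSemidef) (i j : n) : ‖P i j‖ ≤ P.trace.re := by
  classical
  set S := CFC.sqrt P with hS
  have hSh : S.IsHermitian := (CFC.sqrt_nonneg P).posSemidef.1
  have hmul : S * S = P := CFC.sqrt_mul_sqrt_self P hP.nonneg
  have hstar : ∀ k l, S k l = star (S l k) := fun k l => by
    conv_lhs => rw [← hSh.eq]
    rfl
  have keyd : ∀ k, (P k k).re = ∑ l, ‖S k l‖ ^ 2 := by
    intro k
    rw [← hmul, Matrix.mul_apply, Complex.re_sum]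
    refine Finset.sum_congr rfl fun l _ => ?_
    rw [hstar l k, show star (S k l) = starRingEnd ℂ (S k l) from rfl, Complex.mul_conj]
    simp [Complex.sq_norm]
  have htr : 0 ≤ P.trace.re := by
    have h1 := diag_re_le_trace hP i
    have h2 : (0:ℝ) ≤ ∑ l, ‖S i l‖ ^ 2 := Finset.sum_nonneg fun l _ => sq_nonneg _
    nlinarith [keyd i]
  set u : EuclideanSpace ℂ n := WithLp.toLp 2 fun l => star (S i l) with hu
  set v : EuclideanSpace ℂ n := WithLp.toLp 2 fun l => S l j with hv
  have hinner : (inner ℂ u v : ℂ) = P i j := by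
    rw [PiLp.inner_apply]
    simp only [hu, hv, RCLike.inner_apply, starRingEnd_apply, star_star]
    rw [← hmul, Matrix.mul_apply]; exact Finset.sum_congr rfl fun _ _ => mul_comm _ _
  have hnu : ‖u‖ ≤ Real.sqrt P.trace.re := by
    rw [EuclideanSpace.norm_eq]
    apply Real.sqrt_le_sqrt
    calc ∑ l, ‖u l‖ ^ 2 = (P i i).re := by
          rw [keyd i]; exact Finset.sum_congr rfl fun l _ => by rw [hu]; simp
      _ ≤ P.trace.re := diag_re_le_trace hP i
  have hnv : ‖v‖ ≤ Real.sqrt P.trace.re := by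
    rw [EuclideanSpace.norm_eq]
    apply Real.sqrt_le_sqrt
    calc ∑ l, ‖v l‖ ^ 2 = (P j j).re := by
          rw [keyd j]
          exact Finset.sum_congr rfl fun l _ => by rw [hv]; simp only [hstar l j]; simp
      _ ≤ P.trace.re := diag_re_le_trace hP j
  calc ‖P i j‖ = ‖(inner ℂ u v : ℂ)‖ := by rw [hinner]
    _ ≤ ‖u‖ * ‖v‖ := norm_inner_le_norm u v
    _ ≤ Real.sqrt P.trace.re * Real.sqrt P.trace.re :=
        mul_le_mul hnu hnv (norm_nonneg v) (Real.sqrt_nonneg _)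
    _ = P.trace.re := Real.mul_self_sqrt htr

omit [DecidableEq n] in
lemma isClosed_posSemidef : IsClosed {Q : Matrix n n ℂ | Q.PosSemidef} := by
  have hqf : ∀ x : n → ℂ, Continuous fun Q : Matrix n n ℂ => star x ⬝ᵥ Q *ᵥ x := fun x =>
    Continuous.dotProduct continuous_const
      (Continuous.matrix_mulVec continuous_id continuous_const)
  have hset : {Q : Matrix n n ℂ | Q.PosSemidef} =
      {Q : Matrix n n ℂ | Qᴴ = Q} ∩
        ⋂ x : n → ℂ, {Q : Matrix n n ℂ |
          0 ≤ (star x ⬝ᵥ Q *ᵥ x).re ∧ (star x ⬝ᵥ Q *ᵥ x).im = 0} := by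
    ext Q
    constructor
    · rintro ⟨h1, h2⟩
      refine ⟨h1, Set.mem_iInter.mpr fun x => ?_⟩
      have := Complex.le_def.mp (Matrix.PosSemidef.dotProduct_mulVec_nonneg ⟨h1, h2⟩ x)
      exact ⟨by simpa using this.1, by simpa using this.2.symm⟩
    · rintro ⟨h1, h2⟩
      refine Matrix.PosSemidef.of_dotProduct_mulVec_nonneg h1 fun x => ?_
      have := Set.mem_iInter.mp h2 x
      rw [Complex.le_def]
      exact ⟨by simpa using this.1, by simp [this.2]⟩
  rw [hset]
  refine IsClosed.inter (isClosed_eq (continuous_id.matrix_conjTranspose) continuous_id) ?_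
  refine isClosed_iInter fun x => IsClosed.inter ?_ ?_
  · exact isClosed_le continuous_const (Complex.continuous_re.comp (hqf x))
  · exact isClosed_eq (Complex.continuous_im.comp (hqf x)) continuous_const

omit [DecidableEq n] in
lemma cont_tr (C : Matrix n n ℂ) {M : ℕ} (m : Fin M) :
    Continuous fun P : Fin M → Matrix n n ℂ => ((C * P m).trace).re :=
  Complex.continuous_re.comp <|
    Continuous.matrix_trace <| Continuous.matrix_mul continuous_const (continuous_apply m)

lemma isClosed_feasible (a : Fin J → Fin M → Matrix n n ℂ) (b : Fin J → ℝ) :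
    IsClosed {P : Fin M → Matrix n n ℂ | Feasible a b P} := by
  have h1 : IsClosed {P : Fin M → Matrix n n ℂ | ∀ m, (P m).PosSemidef} := by
    rw [show {P : Fin M → Matrix n n ℂ | ∀ m, (P m).PosSemidef}
        = ⋂ m, (fun P : Fin M → Matrix n n ℂ => P m) ⁻¹' {Q | Q.PosSemidef} by
      ext; simp [Set.mem_iInter]]
    exact isClosed_iInter fun m => isClosed_posSemidef.preimage (continuous_apply m)
  have h2 : IsClosed {P : Fin M → Matrix n n ℂ | ∑ m, P m = 1} :=
    isClosed_eq (continuous_finset_sum _ fun m _ => continuous_apply m) continuous_const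
  have h3 : IsClosed {P : Fin M → Matrix n n ℂ |
      ∀ j, ∑ m, ((a j m * P m).trace).re ≤ b j} := by
    rw [show {P : Fin M → Matrix n n ℂ | ∀ j, ∑ m, ((a j m * P m).trace).re ≤ b j}
        = ⋂ j, {P : Fin M → Matrix n n ℂ | ∑ m, ((a j m * P m).trace).re ≤ b j} by
      ext; simp [Set.mem_iInter]]
    exact isClosed_iInter fun j =>
      isClosed_le (continuous_finset_sum _ fun m _ => cont_tr (a j m) m) continuous_const
  have : {P : Fin M → Matrix n n ℂ | Feasible a b P} =
      ({P | ∀ m, (P m).PosSemidef} ∩ {P | ∑ m, P m = 1}) ∩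
        {P | ∀ j, ∑ m, ((a j m * P m).trace).re ≤ b j} := by
    ext P; constructor
    · rintro ⟨⟨u, v⟩, w⟩; exact ⟨⟨u, v⟩, w⟩
    · rintro ⟨⟨u, v⟩, w⟩; exact ⟨⟨u, v⟩, w⟩
  rw [this]
  exact (h1.inter h2).inter h3

omit [Fintype n] [DecidableEq n] in
lemma isCompact_box (R : ℝ) :
    IsCompact {P : Fin M → Matrix n n ℂ | ∀ m i j, ‖P m i j‖ ≤ R} := by
  have : {P : Fin M → Matrix n n ℂ | ∀ m i j, ‖P m i j‖ ≤ R} =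
      Set.pi Set.univ fun _ : Fin M =>
        Set.pi Set.univ fun _ : n =>
          Set.pi Set.univ fun _ : n => Metric.closedBall (0 : ℂ) R := by
    ext P
    show _ ↔ ∀ m ∈ Set.univ, ∀ i ∈ Set.univ, ∀ j ∈ Set.univ, P m i j ∈ Metric.closedBall (0 : ℂ) R
    simp [Set.mem_pi, Set.mem_univ_pi, Metric.mem_closedBall, dist_zero_right]
  rw [this]
  exact isCompact_univ_pi fun _ => isCompact_univ_pi fun _ =>
    isCompact_univ_pi fun _ => isCompact_closedBall 0 R

lemma isCompact_feasible (a : Fin J → Fin M → Matrix n n ℂ) (b : Fin J → ℝ) :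
    IsCompact {P : Fin M → Matrix n n ℂ | Feasible a b P} := by
  refine IsCompact.of_isClosed_subset (isCompact_box (Fintype.card n : ℝ))
    (isClosed_feasible a b) ?_
  rintro P ⟨⟨hpsd, hsum⟩, -⟩
  intro m i j
  refine (entry_norm_le_trace (hpsd m) i j).trans ?_
  have hsumtr : ∑ m', ((P m').trace).re = (Fintype.card n : ℝ) := by
    have h0 : (∑ m', P m').trace = (1 : Matrix n n ℂ).trace := by rw [hsum]
    rw [Matrix.trace_sum] at h0
    have := congrArg Complex.re h0
    rw [Complex.re_sum] at this
    simpa [Matrix.trace_one] using this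
  have hnn : ∀ m', 0 ≤ ((P m').trace).re := fun m' => by
    rw [Matrix.trace, Complex.re_sum]
    exact Finset.sum_nonneg fun i _ => (Complex.le_def.mp (psd_diag_nonneg (hpsd m') i)).1
  calc ((P m).trace).re ≤ ∑ m', ((P m').trace).re :=
        Finset.single_le_sum (fun m' _ => hnn m') (Finset.mem_univ m)
    _ = _ := hsumtr

omit [Fintype n] [DecidableEq n] in
lemma tr_combo [Fintype n] (C Q1 Q2 : Matrix n n ℂ) (t1 t2 : ℝ) :
    ((C * (t1 • Q1 + t2 • Q2)).trace).re
      = t1 * ((C * Q1).trace).re + t2 * ((C * Q2).trace).re := by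
  simp [mul_add, Matrix.mul_smul, Matrix.trace_add, Matrix.trace_smul,
    Complex.real_smul, Complex.add_re, Complex.re_ofReal_mul]

omit [DecidableEq n] in
lemma fObj_combo (c : Fin K → Fin M → Matrix n n ℂ) (d : Fin K → ℝ) (k : Fin K)
    (P1 P2 : Fin M → Matrix n n ℂ) {t1 t2 : ℝ} (h : t1 + t2 = 1) :
    fObj c d k (t1 • P1 + t2 • P2) = t1 * fObj c d k P1 + t2 * fObj c d k P2 := by
  simp only [fObj]
  have hm : ∀ m : Fin M, ((c k m * (t1 • P1 + t2 • P2) m).trace).re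
      = t1 * ((c k m * P1 m).trace).re + t2 * ((c k m * P2 m).trace).re := fun m => by
    have := tr_combo (c k m) (P1 m) (P2 m) t1 t2
    simpa using this
  rw [Finset.sum_congr rfl (fun m _ => hm m), Finset.sum_add_distrib,
    ← Finset.mul_sum, ← Finset.mul_sum]
  linear_combination (-(d k)) * h

lemma feasible_combo (a : Fin J → Fin M → Matrix n n ℂ) (b : Fin J → ℝ)
    {P1 P2 : Fin M → Matrix n n ℂ} (h1 : Feasible a b P1) (h2 : Feasible a b P2)
    {t1 t2 : ℝ} (ht1 : 0 ≤ t1) (ht2 : 0 ≤ t2) (h : t1 + t2 = 1) :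
    Feasible a b (t1 • P1 + t2 • P2) := by
  refine ⟨⟨fun m => ?_, ?_⟩, fun j => ?_⟩
  · have hrw : (t1 • P1 + t2 • P2) m = t1 • P1 m + t2 • P2 m := rfl
    rw [hrw]
    exact (psd_smul (h1.1.1 m) ht1).add (psd_smul (h2.1.1 m) ht2)
  · have hrw : ∀ m : Fin M, (t1 • P1 + t2 • P2) m = t1 • P1 m + t2 • P2 m := fun _ => rfl
    rw [Finset.sum_congr rfl (fun m _ => hrw m), Finset.sum_add_distrib,
      ← Finset.smul_sum, ← Finset.smul_sum, h1.1.2, h2.1.2, ← add_smul, h, one_smul]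
  · have hm : ∀ m : Fin M, ((a j m * (t1 • P1 + t2 • P2) m).trace).re
        = t1 * ((a j m * P1 m).trace).re + t2 * ((a j m * P2 m).trace).re := fun m => by
      have := tr_combo (a j m) (P1 m) (P2 m) t1 t2
      simpa using this
    rw [Finset.sum_congr rfl (fun m _ => hm m), Finset.sum_add_distrib,
      ← Finset.mul_sum, ← Finset.mul_sum]
    calc t1 * (∑ m, ((a j m * P1 m).trace).re) + t2 * (∑ m, ((a j m * P2 m).trace).re)
        ≤ t1 * b j + t2 * b j := by
          gcongr
          exacts [h1.2 j, h2.2 j]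
      _ = b j := by rw [← add_mul, h, one_mul]

end MX

end MXAux

/-- The minimax theorem (Eq. (16)): if the feasible set is nonempty,
there exists a saddle point `(μs, Π⋆)` of `F`, and the max-min and min-max
values both equal `F(μs, Π⋆)`. -/
theorem minimax_theorem
    {n : Type*} [Fintype n] [DecidableEq n] [Nonempty n]
    {M J K : ℕ}
    (a : Fin J → Fin M → Matrix n n ℂ) (b : Fin J → ℝ)
    (c : Fin K → Fin M → Matrix n n ℂ) (d : Fin K → ℝ)
    (ha : ∀ j m, (a j m).IsHermitian) (hc : ∀ k m, (c k m).IsHermitian)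
    (hK : 0 < K)
    (hne : ∃ P, Feasible a b P) :
    ∃ (μs : Fin K → ℝ) (Ps : Fin M → Matrix n n ℂ),
      IsMinimaxSol a b c d μs Ps ∧
      sSup ((fun P => sInf ((fun μ => FObj c d μ P) '' {μ | Simplex μ})) ''
          {P | Feasible a b P}) = FObj c d μs Ps ∧
      FObj c d μs Ps =
        sInf ((fun μ => sSup ((fun P => FObj c d μ P) '' {P | Feasible a b P})) ''
          {μ | Simplex μ}) := by
    classical
  obtain ⟨P0, hP0⟩ := hne
  set T : Set (Fin M → Matrix n n ℂ) := {P | Feasible a b P} with hT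
  have hTne : T.Nonempty := ⟨P0, hP0⟩
  have hTcomp : IsCompact T := MX.isCompact_feasible a b
  have hfc : ∀ k, Continuous fun P : Fin M → Matrix n n ℂ => fObj c d k P := fun k =>
    (continuous_finset_sum _ fun m _ => MX.cont_tr (c k m) m).add continuous_const
  have hFc : ∀ μ : Fin K → ℝ, Continuous fun P : Fin M → Matrix n n ℂ => FObj c d μ P :=
    fun μ => continuous_finset_sum _ fun k _ => continuous_const.mul (hfc k)
  have hKne : (Finset.univ : Finset (Fin K)).Nonempty := ⟨⟨0, hK⟩, Finset.mem_univ _⟩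
  set g : (Fin M → Matrix n n ℂ) → ℝ :=
    fun P => Finset.univ.inf' hKne fun k => fObj c d k P with hg
  have hgc : Continuous g := continuous_iff_continuousAt.mpr fun P =>
    ContinuousAt.finset_inf'_apply hKne fun k _ => (hfc k).continuousAt
  obtain ⟨Ps, hPsT, hPsmax⟩ := hTcomp.exists_isMaxOn hTne hgc.continuousOn
  set v : ℝ := g Ps with hv
  have hg_le : ∀ P ∈ T, g P ≤ v := fun P hP => hPsmax hP
  have hv_le_f : ∀ k, v ≤ fObj c d k Ps := fun k => Finset.inf'_le _ (Finset.mem_univ k)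
  have hg_le_f : ∀ P k, g P ≤ fObj c d k P := fun P k => Finset.inf'_le _ (Finset.mem_univ k)
  have hsum_ge : ∀ (μ : Fin K → ℝ), Simplex μ → ∀ (P) (r : ℝ), (∀ k, r ≤ fObj c d k P) →
      r ≤ FObj c d μ P := by
    intro μ hμ P r hr
    calc r = (∑ k, μ k) * r := by rw [hμ.2, one_mul]
      _ = ∑ k, μ k * r := by rw [Finset.sum_mul]
      _ ≤ ∑ k, μ k * fObj c d k P := Finset.sum_le_sum fun k _ =>
          mul_le_mul_of_nonneg_left (hr k) (hμ.1 k)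
      _ = FObj c d μ P := rfl
  set S : Set (Fin K → ℝ) := (fun P k => fObj c d k P) '' T with hSdef
  have hSconv : Convex ℝ S := by
    rintro y1 ⟨P1, hP1, rfl⟩ y2 ⟨P2, hP2, rfl⟩ t1 t2 ht1 ht2 hts
    refine ⟨t1 • P1 + t2 • P2, MX.feasible_combo a b hP1 hP2 ht1 ht2 hts, ?_⟩
    funext k
    simp only [Pi.add_apply, Pi.smul_apply, smul_eq_mul]
    exact MX.fObj_combo c d k P1 P2 hts
  set U : Set (Fin K → ℝ) := {y | ∀ k, v < y k} with hU
  have hUeq : U = Set.pi Set.univ fun _ : Fin K => Set.Ioi v := by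
    ext y; simp [hU, Set.mem_pi]
  have hUopen : IsOpen U := by
    rw [hUeq]; exact isOpen_set_pi Set.finite_univ fun _ _ => isOpen_Ioi
  have hUconv : Convex ℝ U := by rw [hUeq]; exact convex_pi fun _ _ => convex_Ioi v
  have hdisj : Disjoint U S := by
    rw [Set.disjoint_left]
    rintro y hyU ⟨P, hPT, rfl⟩
    have h1 : v < g P := by
      rw [hg, Finset.lt_inf'_iff]
      exact fun k _ => hyU k
    exact absurd (hg_le P hPT) (not_le.mpr h1)
  obtain ⟨φ, u, hphiU, hphiS⟩ := geometric_hahn_banach_open hUconv hUopen hSconv hdisj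
  set w : Fin K → ℝ := fun k => -(φ fun j => if k = j then 1 else 0) with hw
  have hphi_eq : ∀ y : Fin K → ℝ, φ y = -∑ k, y k * w k := by
    intro y
    have hbase := LinearMap.pi_apply_eq_sum_univ (φ : (Fin K → ℝ) →ₗ[ℝ] ℝ) y
    simp only [ContinuousLinearMap.coe_coe] at hbase
    rw [hbase, ← Finset.sum_neg_distrib]
    refine Finset.sum_congr rfl fun k _ => ?_
    have hek : (φ fun j => if k = j then 1 else 0) = -w k := by simp [hw]
    rw [smul_eq_mul, hek]
    ring
  have hy0U : (fun _ : Fin K => v + 1) ∈ U := fun k => by simp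
  have hwnn : ∀ k, 0 ≤ w k := by
    intro k
    by_contra hneg
    push_neg at hneg
    set e : Fin K → ℝ := fun j => if k = j then 1 else 0 with he
    have hφe : φ e = -w k := by simp [hw, he]
    have hupos : 0 < u - φ (fun _ : Fin K => v + 1) + 1 := by
      have := hphiU _ hy0U; linarith
    set t : ℝ := (u - φ (fun _ : Fin K => v + 1) + 1) / (-w k) with htdef
    have htpos : 0 < t := div_pos hupos (by linarith)
    have hmem : ((fun _ : Fin K => v + 1) + t • e) ∈ U := by
      intro kk
      simp only [Pi.add_apply, Pi.smul_apply, he, smul_eq_mul]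
      by_cases hkk : k = kk
      · rw [if_pos hkk]
        linarith
      · rw [if_neg hkk]
        linarith
    have hlt := hphiU _ hmem
    rw [map_add, _root_.map_smul, hφe, smul_eq_mul, htdef, div_mul_cancel₀ _ (by linarith : -w k ≠ 0)]
      at hlt
    linarith
  have hWnn : 0 ≤ ∑ k, w k := Finset.sum_nonneg fun k _ => hwnn k
  have hWpos : 0 < ∑ k, w k := by
    rcases hWnn.lt_or_eq with hlt | heq
    · exact hlt
    · exfalso
      have hall : ∀ k, w k = 0 := fun k =>
        (Finset.sum_eq_zero_iff_of_nonneg (fun k _ => hwnn k)).mp heq.symm k (Finset.mem_univ k)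
      have hφ0 : ∀ y : Fin K → ℝ, φ y = 0 := fun y => by rw [hphi_eq]; simp [hall]
      have h1 := hphiU _ hy0U
      have h2 := hphiS _ ⟨P0, hP0, rfl⟩
      rw [hφ0] at h1 h2
      linarith
  set W : ℝ := ∑ k, w k with hWdef
  have hWne : W ≠ 0 := ne_of_gt hWpos
  have hkey : ∀ P ∈ T, ∑ k, w k * fObj c d k P ≤ v * W := by
    intro P hP
    have h1 : u ≤ -∑ k, fObj c d k P * w k := by
      have := hphiS _ ⟨P, hP, rfl⟩
      rw [hphi_eq] at this
      simpa using this
    have h2 : ∀ ε : ℝ, 0 < ε → -u < (v + ε) * W := by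
      intro ε hε
      have hmem : (fun _ : Fin K => v + ε) ∈ U := fun k => by simp [hε]
      have hlt := hphiU _ hmem
      rw [hphi_eq] at hlt
      have hsum : ∑ k, (fun _ : Fin K => v + ε) k * w k = (v + ε) * W := by
        simp [← Finset.mul_sum, hWdef]
      rw [hsum] at hlt
      linarith
    have h3 : -u ≤ v * W := by
      by_contra hcon
      push_neg at hcon
      have hε : 0 < (-u - v * W) / W := div_pos (by linarith) hWpos
      have := h2 _ hε
      rw [add_mul, div_mul_cancel₀ _ hWne] at this
      linarith
    calc ∑ k, w k * fObj c d k P = ∑ k, fObj c d k P * w k :=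
          Finset.sum_congr rfl fun k _ => mul_comm _ _
      _ ≤ -u := by linarith
      _ ≤ v * W := h3
  set μs : Fin K → ℝ := fun k => w k / W with hμsdef
  have hμs : Simplex μs := by
    constructor
    · exact fun k => div_nonneg (hwnn k) hWpos.le
    · rw [hμsdef]
      simp only
      rw [← Finset.sum_div, ← hWdef, div_self hWne]
  have hFμs : ∀ P, FObj c d μs P = (∑ k, w k * fObj c d k P) / W := by
    intro P
    rw [FObj, Finset.sum_div]
    refine Finset.sum_congr rfl fun k _ => ?_
    rw [hμsdef]
    ring
  have saddle1 : ∀ P ∈ T, FObj c d μs P ≤ v := by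
    intro P hP
    rw [hFμs, div_le_iff₀ hWpos]
    exact hkey P hP
  have hvle : v ≤ FObj c d μs Ps := hsum_ge μs hμs Ps v hv_le_f
  have hveq : FObj c d μs Ps = v := le_antisymm (saddle1 Ps hPsT) hvle
  have saddle2 : ∀ μ, Simplex μ → FObj c d μs Ps ≤ FObj c d μ Ps := fun μ hμ => by
    rw [hveq]; exact hsum_ge μ hμ Ps v hv_le_f
  refine ⟨μs, Ps, ⟨hμs, hPsT, fun P hP => (saddle1 P hP).trans hvle, saddle2⟩, ?_, ?_⟩
  · have hlow : ∀ P, BddBelow ((fun μ => FObj c d μ P) '' {μ | Simplex μ}) := by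
      intro P
      refine ⟨g P, ?_⟩
      rintro x ⟨μ, hμ, rfl⟩
      exact hsum_ge μ hμ P (g P) (hg_le_f P)
    refine IsGreatest.csSup_eq ⟨⟨Ps, hPsT, ?_⟩, ?_⟩
    · refine IsLeast.csInf_eq ⟨⟨μs, hμs, rfl⟩, ?_⟩
      rintro x ⟨μ, hμ, rfl⟩
      exact saddle2 μ hμ
    · rintro x ⟨P, hP, rfl⟩
      calc sInf ((fun μ => FObj c d μ P) '' {μ | Simplex μ})
          ≤ FObj c d μs P := csInf_le (hlow P) ⟨μs, hμs, rfl⟩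
        _ ≤ FObj c d μs Ps := (saddle1 P hP).trans hvle
  · have hupb : ∀ μ : Fin K → ℝ, BddAbove ((fun P => FObj c d μ P) '' T) := fun μ =>
      hTcomp.bddAbove_image (hFc μ).continuousOn
    have hsup : sSup ((fun P => FObj c d μs P) '' T) = FObj c d μs Ps := by
      refine IsGreatest.csSup_eq ⟨⟨Ps, hPsT, rfl⟩, ?_⟩
      rintro x ⟨P, hP, rfl⟩
      exact (saddle1 P hP).trans hvle
    refine Eq.symm (IsLeast.csInf_eq ⟨⟨μs, hμs, hsup⟩, ?_⟩)
    rintro x ⟨μ, hμ, rfl⟩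
    exact (saddle2 μ hμ).trans (le_csSup (hupb μ) ⟨Ps, hPsT, rfl⟩)
end
end

section
/- Theorem 3, (2) ⇒ (1): let μ* ∈ P and Π* ∈ 𝓜ᵐᵐ, and suppose f k (Π*) ≥ F*(μ*) for every k ∈ Fin K, where F*(μ*) is the supremum of F(μ*, Π) over Π ∈ 𝓜ᵐᵐ. Then (μ*, Π*) is a minimax solution, i.e. F(μ*, Π) ≤ F(μ*, Π*) ≤ F(μ, Π*) for all μ ∈ P and all Π ∈ 𝓜ᵐᵐ. -/
open Matrix Complex
open scoped ComplexOrder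

noncomputable section

/-- Diagonal entries of a PSD matrix have nonnegative real part. -/
lemma psd_diag_re_nonneg {n : Type*} [Fintype n] [DecidableEq n] {Q : Matrix n n ℂ}
    (hQ : Q.PosSemidef) (i : n) : 0 ≤ (Q i i).re := by
  have := hQ.re_dotProduct_nonneg (Pi.single i 1)
  simpa [dotProduct, Matrix.mulVec_single, Pi.single_apply] using this

/-- Entry bound for PSD matrices via Cauchy-Schwarz. -/
lemma psd_entry_norm_le {n : Type*} [Fintype n] [DecidableEq n] {Q : Matrix n n ℂ}
    (hQ : Q.PosSemidef) (i j : n) :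
    ‖Q i j‖ ≤ Real.sqrt (Q i i).re * Real.sqrt (Q j j).re := by
  obtain ⟨B, rfl⟩ : ∃ B : Matrix n n ℂ, Q = Bᴴ * B := by
    open MatrixOrder in exact CStarAlgebra.nonneg_iff_eq_star_mul_self.mp hQ.nonneg
  set col : n → EuclideanSpace ℂ n := fun i => WithLp.toLp 2 (fun p => B p i) with hcol
  have key : ∀ i j : n, (Bᴴ * B) i j = inner ℂ (col i) (col j) := by
    intro i j
    rw [PiLp.inner_apply]
    simp [hcol, Matrix.mul_apply, Matrix.conjTranspose_apply, RCLike.inner_apply]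
    exact Finset.sum_congr rfl fun _ _ => mul_comm _ _
  rw [key i j]
  have h1 := norm_inner_le_norm (𝕜 := ℂ) (col i) (col j)
  have hxn : ‖col i‖ = Real.sqrt ((Bᴴ * B) i i).re := by
    rw [norm_eq_sqrt_re_inner (𝕜 := ℂ), key i i]; rfl
  have hyn : ‖col j‖ = Real.sqrt ((Bᴴ * B) j j).re := by
    rw [norm_eq_sqrt_re_inner (𝕜 := ℂ), key j j]; rfl
  rw [hxn, hyn] at h1
  exact h1

/-- Entries of POVM elements are bounded by 1. -/
lemma povm_entry_norm_le {n : Type*} [Fintype n] [DecidableEq n] {M : ℕ}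
    {P : Fin M → Matrix n n ℂ} (hP : IsPOVM P) (m : Fin M) (i j : n) :
    ‖P m i j‖ ≤ 1 := by
  have hdiag : ∀ i : n, (P m i i).re ≤ 1 := by
    intro i
    have hsum : ∑ m', (P m' i i).re = 1 := by
      have : (∑ m', P m') i i = (1 : Matrix n n ℂ) i i := by rw [hP.2]
      have h1 : (∑ m', P m' i i) = 1 := by
        simpa [Matrix.sum_apply, Matrix.one_apply] using this
      calc ∑ m', (P m' i i).re = ((∑ m', P m' i i) : ℂ).re := by
            rw [Complex.re_sum]
        _ = 1 := by rw [h1]; simp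
    calc (P m i i).re ≤ ∑ m', (P m' i i).re :=
          Finset.single_le_sum (fun m' _ => psd_diag_re_nonneg (hP.1 m') i)
            (Finset.mem_univ m)
      _ = 1 := hsum
  have h1 := psd_entry_norm_le (hP.1 m) i j
  have hi : Real.sqrt (P m i i).re ≤ 1 := by
    rw [show (1:ℝ) = Real.sqrt 1 by simp]
    exact Real.sqrt_le_sqrt (hdiag i)
  have hj : Real.sqrt (P m j j).re ≤ 1 := by
    rw [show (1:ℝ) = Real.sqrt 1 by simp]
    exact Real.sqrt_le_sqrt (hdiag j)
  calc ‖P m i j‖ ≤ Real.sqrt (P m i i).re * Real.sqrt (P m j j).re := h1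
    _ ≤ 1 * 1 := mul_le_mul hi hj (Real.sqrt_nonneg _) zero_le_one
    _ = 1 := by ring

/-- Bound on the real trace for bounded-entry multipliers. -/
lemma trace_re_le_of_entry_bound {n : Type*} [Fintype n]
    (c P : Matrix n n ℂ) (hP : ∀ i j, ‖P i j‖ ≤ 1) :
    ((c * P).trace).re ≤ ∑ i, ∑ j, ‖c i j‖ := by
  have : ((c * P).trace).re ≤ ‖(c * P).trace‖ := Complex.re_le_norm _
  refine this.trans ?_
  simp only [Matrix.trace, Matrix.diag]
  calc ‖∑ i, (c * P) i i‖ ≤ ∑ i, ‖(c * P) i i‖ := norm_sum_le _ _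
    _ ≤ ∑ i, ∑ j, ‖c i j‖ := by
        refine Finset.sum_le_sum fun i _ => ?_
        rw [Matrix.mul_apply]
        calc ‖∑ j, c i j * P j i‖ ≤ ∑ j, ‖c i j * P j i‖ := norm_sum_le _ _
          _ ≤ ∑ j, ‖c i j‖ := by
              refine Finset.sum_le_sum fun j _ => ?_
              rw [norm_mul]
              calc ‖c i j‖ * ‖P j i‖ ≤ ‖c i j‖ * 1 :=
                    mul_le_mul_of_nonneg_left (hP j i) (norm_nonneg _)
                _ = ‖c i j‖ := mul_one _

/-- The feasible values of `F(μ, ·)` are bounded above. -/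
lemma FObj_bddAbove {n : Type*} [Fintype n] [DecidableEq n] {M J K : ℕ}
    (a : Fin J → Fin M → Matrix n n ℂ) (b : Fin J → ℝ)
    (c : Fin K → Fin M → Matrix n n ℂ) (d : Fin K → ℝ)
    (μ : Fin K → ℝ) (hμ : ∀ k, 0 ≤ μ k) :
    BddAbove ((fun P => FObj c d μ P) '' {P | Feasible a b P}) := by
  refine ⟨∑ k, μ k * ((∑ m, ∑ i, ∑ j, ‖c k m i j‖) + |d k|), ?_⟩
  rintro x ⟨P, hPfeas, rfl⟩
  unfold FObj
  refine Finset.sum_le_sum fun k _ => ?_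
  refine mul_le_mul_of_nonneg_left ?_ (hμ k)
  unfold fObj
  have hd : d k ≤ |d k| := le_abs_self _
  refine add_le_add ?_ hd
  refine Finset.sum_le_sum fun m _ => ?_
  exact trace_re_le_of_entry_bound _ _ (povm_entry_norm_le hPfeas.1 m)

/-- Theorem 3, (2) ⇒ (1): if `f k (Π⋆) ≥ F⋆(μs)` for all `k`, then `(μs, Π⋆)`
is a minimax solution. -/

theorem fk_ge_implies_minimax_sol
    {n : Type*} [Fintype n] [DecidableEq n] [Nonempty n]
    {M J K : ℕ}
    (a : Fin J → Fin M → Matrix n n ℂ) (b : Fin J → ℝ)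
    (c : Fin K → Fin M → Matrix n n ℂ) (d : Fin K → ℝ)
    (ha : ∀ j m, (a j m).IsHermitian) (hc : ∀ k m, (c k m).IsHermitian)
    (μs : Fin K → ℝ) (Ps : Fin M → Matrix n n ℂ)
    (hμ : Simplex μs) (hP : Feasible a b Ps)
    (h : ∀ k, Fstar a b c d μs ≤ fObj c d k Ps) :
    IsMinimaxSol a b c d μs Ps := by
  have hbdd := FObj_bddAbove a b c d μs hμ.1
  have hle_star : ∀ P, Feasible a b P → FObj c d μs P ≤ Fstar a b c d μs := by
    intro P hPf
    exact le_csSup hbdd ⟨P, hPf, rfl⟩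
  have hstar_le : Fstar a b c d μs ≤ FObj c d μs Ps := by
    calc Fstar a b c d μs = ∑ k, μs k * Fstar a b c d μs := by
          rw [← Finset.sum_mul, hμ.2, one_mul]
      _ ≤ ∑ k, μs k * fObj c d k Ps :=
          Finset.sum_le_sum fun k _ => mul_le_mul_of_nonneg_left (h k) (hμ.1 k)
      _ = FObj c d μs Ps := rfl
  refine ⟨hμ, hP, ?_, ?_⟩
  · intro P hPf
    exact (hle_star P hPf).trans hstar_le
  · intro μ hμ'
    have : Fstar a b c d μs ≤ FObj c d μ Ps := by
      calc Fstar a b c d μs = ∑ k, μ k * Fstar a b c d μs := by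
            rw [← Finset.sum_mul, hμ'.2, one_mul]
        _ ≤ ∑ k, μ k * fObj c d k Ps :=
            Finset.sum_le_sum fun k _ => mul_le_mul_of_nonneg_left (h k) (hμ'.1 k)
        _ = FObj c d μ Ps := rfl
    exact (hle_star Ps hP).trans this
end
end

section
/- Theorem 4: assume 𝓜ᵐᵐ is nonempty and a minimax solution exists. A POVM Π⁺ ∈ 𝓜ᵐᵐ maximizes f_min(Π) = min_{k ∈ Fin K} f k (Π) over 𝓜ᵐᵐ if and only if Π⁺ is a minimax measurement, i.e. there exists μ⁺ ∈ P such that (μ⁺, Π⁺) is a minimax solution (saddle point of F). -/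
open Matrix Complex
open scoped ComplexOrder

noncomputable section

/-- Theorem 4: assuming a minimax solution exists, a feasible POVM `Π⁺` maximizes
`f_min(Π) = min_k f k (Π)` over the feasible set if and only if it is a minimax
measurement. -/
theorem minimax_measurement_iff_maximizes_fmin
    {n : Type*} [Fintype n] [DecidableEq n] [Nonempty n]
    {M J K : ℕ}
    (a : Fin J → Fin M → Matrix n n ℂ) (b : Fin J → ℝ)
    (c : Fin K → Fin M → Matrix n n ℂ) (d : Fin K → ℝ)
    (ha : ∀ j m, (a j m).IsHermitian) (hc : ∀ k m, (c k m).IsHermitian)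
    (hK : 0 < K)
    (hne : ∃ P, Feasible a b P)
    (hex : ∃ μs Ps, IsMinimaxSol a b c d μs Ps)
    (Pp : Fin M → Matrix n n ℂ) (hPp : Feasible a b Pp) :
    (∀ P, Feasible a b P →
        (⨅ k, fObj c d k P) ≤ (⨅ k, fObj c d k Pp)) ↔
      ∃ μp, IsMinimaxSol a b c d μp Pp := by
  obtain ⟨μs, Ps, hμs, hPs, hmax, hmin⟩ := hex
  haveI : Nonempty (Fin K) := ⟨⟨0, hK⟩⟩
  -- Lemma A: the min of the f's is below any convex combination
  have hA : ∀ (μ : Fin K → ℝ), Simplex μ → ∀ P : Fin M → Matrix n n ℂ,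
      (⨅ k, fObj c d k P) ≤ FObj c d μ P := by
    intro μ hμ P
    calc (⨅ k, fObj c d k P) = ∑ k, μ k * (⨅ k', fObj c d k' P) := by
          rw [← Finset.sum_mul, hμ.2, one_mul]
      _ ≤ ∑ k, μ k * fObj c d k P := by
          refine Finset.sum_le_sum fun k _ => ?_
          exact mul_le_mul_of_nonneg_left
            (ciInf_le (Set.Finite.bddBelow (Set.finite_range _)) k) (hμ.1 k)
      _ = FObj c d μ P := rfl
  -- Lemma B: unit vectors are in the simplex and F at a unit vector is f k
  have hE : ∀ (k : Fin K) (P : Fin M → Matrix n n ℂ),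
      Simplex (fun k' => if k' = k then (1:ℝ) else 0) ∧
      FObj c d (fun k' => if k' = k then (1:ℝ) else 0) P = fObj c d k P := by
    intro k P
    refine ⟨⟨fun k' => by dsimp only; split <;> norm_num, by simp⟩, ?_⟩
    unfold FObj
    simp [ite_mul]
  -- the saddle value equals min_k f_k (Ps)
  have hvle : (⨅ k, fObj c d k Ps) ≤ FObj c d μs Ps := hA μs hμs Ps
  have hvge : FObj c d μs Ps ≤ ⨅ k, fObj c d k Ps := by
    refine le_ciInf fun k => ?_
    have h := hmin _ (hE k Ps).1
    rwa [(hE k Ps).2] at h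
  have hv : (⨅ k, fObj c d k Ps) = FObj c d μs Ps := le_antisymm hvle hvge
  constructor
  · intro hopt
    refine ⟨μs, hμs, hPp, ?_, ?_⟩
    · intro P hP
      have h1 : FObj c d μs P ≤ FObj c d μs Ps := hmax P hP
      have h2 : FObj c d μs Ps ≤ ⨅ k, fObj c d k Pp := hv ▸ hopt Ps hPs
      exact h1.trans (h2.trans (hA μs hμs Pp))
    · intro μ hμ
      have h1 : FObj c d μs Pp ≤ FObj c d μs Ps := hmax Pp hPp
      have h2 : FObj c d μs Ps ≤ ⨅ k, fObj c d k Pp := hv ▸ hopt Ps hPs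
      exact h1.trans (h2.trans (hA μ hμ Pp))
  · rintro ⟨μp, hμp, -, hmax', hmin'⟩ P hP
    have h2 : FObj c d μp Pp ≤ ⨅ k, fObj c d k Pp := by
      refine le_ciInf fun k => ?_
      have h := hmin' _ (hE k Pp).1
      rwa [(hE k Pp).2] at h
    exact (hA μp hμp P).trans ((hmax' P hP).trans h2)
end
end

section
/- Lemma 1, second part: under the covariance assumptions on the constraints, for every Φ ∈ 𝓜ᵐᵐ the averaged family Π defined by Π m = (1/|G|) ∑_{g ∈ G} (U g)⁻¹ * Φ (g • m) * (U g) belongs to 𝓜ᵐᵐ and is G-covariant: (U g) * Π m * (U g)† = Π (g • m) for all g ∈ G and m ∈ Fin M. -/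
open Matrix Complex
open scoped ComplexOrder

noncomputable section

/-- The action `g · A = (U g) * A * (U g)†` of a group on matrices induced by a
unitary representation `U`. -/
def conjAct {n : Type*} [Fintype n] [DecidableEq n] {G : Type*} [Group G]
    (U : G →* Matrix.unitaryGroup n ℂ) (g : G) (A : Matrix n n ℂ) : Matrix n n ℂ :=
  (U g : Matrix n n ℂ) * A * star (U g : Matrix n n ℂ)

/-- The mapping `κ_g` sending `Φ` to `m ↦ (U g)⁻¹ * Φ (g • m) * (U g)`
(note `(U g)⁻¹ = (U g)† = star (U g)`). -/
def kappa {n : Type*} [Fintype n] [DecidableEq n] {G : Type*} [Group G] {M : ℕ}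
    [MulAction G (Fin M)]
    (U : G →* Matrix.unitaryGroup n ℂ) (g : G)
    (Φ : Fin M → Matrix n n ℂ) : Fin M → Matrix n n ℂ :=
  fun m => star (U g : Matrix n n ℂ) * Φ (g • m) * (U g : Matrix n n ℂ)


section Helpers

variable {n : Type*} [Fintype n] [DecidableEq n]

lemma psd_smul_real {A : Matrix n n ℂ} (hA : A.PosSemidef)
    {c : ℝ} (hc : 0 ≤ c) : ((c : ℂ) • A).PosSemidef := by
  constructor
  · unfold Matrix.IsHermitian
    rw [Matrix.conjTranspose_smul, hA.1]
    simp
  · intro x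
    exact (hA.smul (a := (c : ℂ)) (by exact_mod_cast hc)).2 x

lemma psd_sum {ι : Type*} (s : Finset ι) (f : ι → Matrix n n ℂ)
    (h : ∀ i ∈ s, (f i).PosSemidef) : (∑ i ∈ s, f i).PosSemidef :=
  Finset.sum_induction f Matrix.PosSemidef (fun _ _ hx hy => hx.add hy)
    Matrix.PosSemidef.zero h

end Helpers

/-- Lemma 1, second part: the group average of a feasible POVM is feasible
and `G`-covariant. -/
theorem averaged_povm_feasible_and_covariant
    {n : Type*} [Fintype n] [DecidableEq n] [Nonempty n]
    {G : Type*} [Group G] [Fintype G]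
    {M J : ℕ} [MulAction G (Fin M)] [MulAction G (Fin J)]
    (U : G →* Matrix.unitaryGroup n ℂ)
    (a : Fin J → Fin M → Matrix n n ℂ) (b : Fin J → ℝ)
    (ha : ∀ j m, (a j m).IsHermitian)
    (hne : ∃ P, Feasible a b P)
    (hcova : ∀ (g : G) j m, conjAct U g (a j m) = a (g • j) (g • m))
    (hcovb : ∀ (g : G) j, b j = b (g • j))
    (Φ : Fin M → Matrix n n ℂ) (hΦ : Feasible a b Φ) :
    Feasible a b (fun m => (Fintype.card G : ℂ)⁻¹ • ∑ g : G, kappa U g Φ m) ∧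
    ∀ (g : G) (m : Fin M),
      conjAct U g ((Fintype.card G : ℂ)⁻¹ • ∑ h : G, kappa U h Φ m) =
        (Fintype.card G : ℂ)⁻¹ • ∑ h : G, kappa U h Φ (g • m) := by
  classical
  obtain ⟨⟨hΦpsd, hΦsum⟩, hΦcon⟩ := hΦ
  have hNC : (Fintype.card G : ℂ) ≠ 0 := by exact_mod_cast Fintype.card_ne_zero
  have hNR : (0:ℝ) < (Fintype.card G : ℝ) := by exact_mod_cast Fintype.card_pos
  have hU1 : ∀ g : G, star (U g : Matrix n n ℂ) * (U g : Matrix n n ℂ) = 1 :=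
    fun g => (U g).prop.1
  have hU2 : ∀ g : G, (U g : Matrix n n ℂ) * star (U g : Matrix n n ℂ) = 1 :=
    fun g => (U g).prop.2
  have hstar : ∀ g : G, star (U g : Matrix n n ℂ) = ((U g⁻¹ : Matrix.unitaryGroup n ℂ) : Matrix n n ℂ) := by
    intro g
    rw [map_inv, ← Unitary.star_eq_inv]
    rfl
  -- key trace identity
  have key : ∀ (g : G) (j : Fin J) (m : Fin M),
      (a j m * kappa U g Φ m).trace = (a (g • j) (g • m) * Φ (g • m)).trace := by
    intro g j m
    rw [← hcova g j m]
    unfold conjAct kappa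
    rw [← mul_assoc, ← mul_assoc, Matrix.trace_mul_cycle, mul_assoc, ← mul_assoc]
    simp [mul_assoc]
  -- each kappa g Φ is a POVM satisfying the constraints with respect to j
  have hsum_g : ∀ (g : G) (j : Fin J),
      ∑ m, ((a j m * kappa U g Φ m).trace).re ≤ b j := by
    intro g j
    have h1 : ∑ m, ((a j m * kappa U g Φ m).trace).re
        = ∑ m, ((a (g • j) m * Φ m).trace).re := by
      rw [← Equiv.sum_comp (MulAction.toPerm g) (fun m => ((a (g • j) m * Φ m).trace).re)]
      exact Finset.sum_congr rfl fun m _ => by rw [key g j m]; rfl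
    rw [h1, hcovb g j]
    exact hΦcon (g • j)
  have hone : ∀ g : G, ∑ m, kappa U g Φ m = 1 := by
    intro g
    have h2 : ∑ m, Φ (g • m) = 1 := by
      rw [← hΦsum]
      exact Equiv.sum_comp (MulAction.toPerm g) Φ
    calc ∑ m, kappa U g Φ m
        = star (U g : Matrix n n ℂ) * (∑ m, Φ (g • m)) * (U g : Matrix n n ℂ) := by
          simp [kappa, Finset.mul_sum, Finset.sum_mul]
      _ = 1 := by rw [h2, mul_one, hU1 g]
  refine ⟨⟨⟨?_, ?_⟩, ?_⟩, ?_⟩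
  · -- PSD
    intro m
    have : ((((Fintype.card G : ℝ)⁻¹ : ℝ) : ℂ) • ∑ g : G, kappa U g Φ m).PosSemidef := by
      apply psd_smul_real
      · apply psd_sum
        intro g _
        have := (hΦpsd (g • m)).conjTranspose_mul_mul_same (U g : Matrix n n ℂ)
        simpa [kappa, Matrix.star_eq_conjTranspose] using this
      · positivity
    simpa using this
  · -- sums to 1
    rw [← Finset.smul_sum, Finset.sum_comm]
    have : ∑ g : G, ∑ m, kappa U g Φ m = (Fintype.card G : ℂ) • (1 : Matrix n n ℂ) := by
      rw [Finset.sum_congr rfl (fun g _ => hone g), Finset.sum_const, Finset.card_univ,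
        Nat.cast_smul_eq_nsmul]
    rw [this, smul_smul, inv_mul_cancel₀ hNC, one_smul]
  · -- constraints
    intro j
    have hre : ∀ m : Fin M,
        ((a j m * ((Fintype.card G : ℂ)⁻¹ • ∑ g : G, kappa U g Φ m)).trace).re
        = (Fintype.card G : ℝ)⁻¹ * ∑ g : G, ((a j m * kappa U g Φ m).trace).re := by
      intro m
      rw [Matrix.mul_smul, Matrix.trace_smul, Finset.mul_sum]
      have hcast : (Fintype.card G : ℂ)⁻¹ = (((Fintype.card G : ℝ)⁻¹ : ℝ) : ℂ) := by
        push_cast; ring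
      rw [hcast, smul_eq_mul, Complex.re_ofReal_mul, Finset.mul_sum, Matrix.trace_sum,
        Complex.re_sum, Finset.mul_sum]
    calc ∑ m, ((a j m * ((Fintype.card G : ℂ)⁻¹ • ∑ g : G, kappa U g Φ m)).trace).re
        = (Fintype.card G : ℝ)⁻¹ * ∑ g : G, ∑ m, ((a j m * kappa U g Φ m).trace).re := by
          rw [Finset.sum_congr rfl (fun m _ => hre m), ← Finset.mul_sum, Finset.sum_comm]
      _ ≤ (Fintype.card G : ℝ)⁻¹ * ∑ _g : G, b j := by
          apply mul_le_mul_of_nonneg_left _ (by positivity)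
          exact Finset.sum_le_sum fun g _ => hsum_g g j
      _ = b j := by
          rw [Finset.sum_const, Finset.card_univ, nsmul_eq_mul]
          field_simp
  · -- covariance
    intro g m
    have hconj : ∀ h : G, conjAct U g (kappa U h Φ m) = kappa U (h * g⁻¹) Φ (g • m) := by
      intro h
      unfold conjAct kappa
      have hsmul : (h * g⁻¹) • (g • m) = h • m := by
        rw [smul_smul, inv_mul_cancel_right]
      rw [hsmul]
      have hUhg : ((U (h * g⁻¹) : Matrix.unitaryGroup n ℂ) : Matrix n n ℂ)
          = (U h : Matrix n n ℂ) * star (U g : Matrix n n ℂ) := by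
        rw [_root_.map_mul, hstar g]
        rfl
      rw [hUhg, StarMul.star_mul, star_star]
      noncomm_ring
    unfold conjAct
    rw [Matrix.mul_smul, Matrix.smul_mul]
    congr 1
    rw [Finset.mul_sum, Finset.sum_mul]
    rw [← Equiv.sum_comp (Equiv.mulRight g⁻¹) (fun h => kappa U h Φ (g • m))]
    refine Finset.sum_congr rfl fun h _ => ?_
    have := hconj h
    unfold conjAct at this
    simpa using this
end
end

section
/- Theorem 6: under the covariance assumptions for the minimax problem, if a minimax solution exists and 𝓜ᵐᵐ is nonempty, then there exists a minimax solution (μ, Π) that is G-covariant: μ k = μ (g • k) for all g ∈ G and k ∈ Fin K, and (U g) * Π m * (U g)† = Π (g • m) for all g ∈ G and m ∈ Fin M. -/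
open Matrix Complex
open scoped ComplexOrder

noncomputable section

section Aux

variable {n : Type*} [Fintype n] [DecidableEq n]

lemma trace_conj_eq (V A B : Matrix n n ℂ) :
    (A * (star V * B * V)).trace = ((V * A * star V) * B).trace := by
  have h1 : A * (star V * B * V) = (A * star V * B) * V := by
    simp only [mul_assoc]
  rw [h1, Matrix.trace_mul_comm]
  simp only [mul_assoc]

lemma posSemidef_real_smul {r : ℝ} (hr : 0 ≤ r) {A : Matrix n n ℂ}
    (hA : A.PosSemidef) : (r • A).PosSemidef := by
  constructor
  · unfold Matrix.IsHermitian
    rw [Matrix.conjTranspose_smul, star_trivial, hA.1.eq]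
  · intro x
    exact (hA.smul hr).2 x

end Aux

/-- Theorem 6: under the covariance assumptions, if a minimax solution exists then
there exists a `G`-covariant minimax solution. -/
theorem exists_covariant_minimax_solution
    {n : Type*} [Fintype n] [DecidableEq n] [Nonempty n]
    {G : Type*} [Group G] [Fintype G]
    {M J K : ℕ} [MulAction G (Fin M)] [MulAction G (Fin J)] [MulAction G (Fin K)]
    (U : G →* Matrix.unitaryGroup n ℂ)
    (a : Fin J → Fin M → Matrix n n ℂ) (b : Fin J → ℝ)
    (c : Fin K → Fin M → Matrix n n ℂ) (d : Fin K → ℝ)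
    (ha : ∀ j m, (a j m).IsHermitian) (hc : ∀ k m, (c k m).IsHermitian)
    (hne : ∃ P, Feasible a b P)
    (hcova : ∀ (g : G) j m, conjAct U g (a j m) = a (g • j) (g • m))
    (hcovb : ∀ (g : G) j, b j = b (g • j))
    (hcovc : ∀ (g : G) k m, conjAct U g (c k m) = c (g • k) (g • m))
    (hcovd : ∀ (g : G) k, d k = d (g • k))
    (hex : ∃ μs Ps, IsMinimaxSol a b c d μs Ps) :
    ∃ (μ : Fin K → ℝ) (P : Fin M → Matrix n n ℂ),
      IsMinimaxSol a b c d μ P ∧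
      (∀ (g : G) (k : Fin K), μ k = μ (g • k)) ∧
      (∀ (g : G) (m : Fin M), conjAct U g (P m) = P (g • m)) := by
  classical
  obtain ⟨μs, Ps, hSμ, hFPs, hmax, hmin⟩ := hex
  set v : ℝ := FObj c d μs Ps with hvdef
  -- unitarity facts
  have hstar_mul : ∀ g : G, star (U g : Matrix n n ℂ) * (U g : Matrix n n ℂ) = 1 :=
    fun g => (U g).2.1
  have hmul_star : ∀ g : G, (U g : Matrix n n ℂ) * star (U g : Matrix n n ℂ) = 1 :=
    fun g => (U g).2.2
  -- key trace identities
  have key_c : ∀ (g : G) (k : Fin K) (P : Fin M → Matrix n n ℂ),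
      fObj c d k (kappa U g P) = fObj c d (g • k) P := by
    intro g k P
    unfold fObj kappa
    congr 1
    · have hterm : ∀ m : Fin M,
          ((c k m * (star (U g : Matrix n n ℂ) * P (g • m) * (U g : Matrix n n ℂ))).trace).re
          = ((c (g • k) (g • m) * P (g • m)).trace).re := by
        intro m
        rw [trace_conj_eq]
        have h := hcovc g k m
        unfold conjAct at h
        rw [h]
      calc ∑ m, ((c k m * (star (U g : Matrix n n ℂ) * P (g • m) * (U g : Matrix n n ℂ))).trace).re
          = ∑ m, ((c (g • k) (g • m) * P (g • m)).trace).re :=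
            Finset.sum_congr rfl fun m _ => hterm m
        _ = ∑ m, ((c (g • k) m * P m).trace).re :=
            Equiv.sum_comp (MulAction.toPerm g) (fun m => ((c (g • k) m * P m).trace).re)
    · exact hcovd g k
  have key_a : ∀ (g : G) (j : Fin J) (P : Fin M → Matrix n n ℂ),
      ∑ m, ((a j m * kappa U g P m).trace).re = ∑ m, ((a (g • j) m * P m).trace).re := by
    intro g j P
    have hterm : ∀ m : Fin M,
        ((a j m * kappa U g P m).trace).re = ((a (g • j) (g • m) * P (g • m)).trace).re := by
      intro m
      unfold kappa
      rw [trace_conj_eq]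
      have h := hcova g j m
      unfold conjAct at h
      rw [h]
    calc ∑ m, ((a j m * kappa U g P m).trace).re
        = ∑ m, ((a (g • j) (g • m) * P (g • m)).trace).re :=
          Finset.sum_congr rfl fun m _ => hterm m
      _ = ∑ m, ((a (g • j) m * P m).trace).re :=
          Equiv.sum_comp (MulAction.toPerm g) (fun m => ((a (g • j) m * P m).trace).re)
  -- kappa preserves feasibility
  have kappa_feas : ∀ (g : G) (P : Fin M → Matrix n n ℂ),
      Feasible a b P → Feasible a b (kappa U g P) := by
    rintro g P ⟨⟨hpsd, hsum⟩, hcon⟩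
    refine ⟨⟨?_, ?_⟩, ?_⟩
    · intro m
      have h := (hpsd (g • m)).mul_mul_conjTranspose_same (star (U g : Matrix n n ℂ))
      have hB : (star (U g : Matrix n n ℂ))ᴴ = (U g : Matrix n n ℂ) := by
        rw [Matrix.star_eq_conjTranspose, Matrix.conjTranspose_conjTranspose]
      rw [hB] at h
      exact h
    · unfold kappa
      rw [show (∑ m, star (U g : Matrix n n ℂ) * P (g • m) * (U g : Matrix n n ℂ))
          = star (U g : Matrix n n ℂ) * (∑ m, P (g • m)) * (U g : Matrix n n ℂ) by
        rw [Finset.mul_sum, Finset.sum_mul]]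
      rw [show (∑ m, P (g • m)) = 1 from (Equiv.sum_comp (MulAction.toPerm g) P).trans hsum,
        mul_one, hstar_mul g]
    · intro j
      rw [key_a g j P]
      exact (hcon (g • j)).trans_eq (hcovb g j).symm
  -- shifting a simplex element
  have simplex_shift : ∀ (g : G) (μ : Fin K → ℝ), Simplex μ → Simplex (fun k => μ (g • k)) := by
    rintro g μ ⟨h0, h1⟩
    exact ⟨fun k => h0 _, (Equiv.sum_comp (MulAction.toPerm g) μ).trans h1⟩
  -- FObj under kappa
  have FObj_kappa : ∀ (g : G) (μ : Fin K → ℝ) (P : Fin M → Matrix n n ℂ),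
      FObj c d μ (kappa U g P) = FObj c d (fun k => μ (g⁻¹ • k)) P := by
    intro g μ P
    unfold FObj
    calc ∑ k, μ k * fObj c d k (kappa U g P)
        = ∑ k, μ k * fObj c d (g • k) P := by
          exact Finset.sum_congr rfl fun k _ => by rw [key_c g k P]
      _ = ∑ k, μ (g⁻¹ • k) * fObj c d k P := by
          rw [← Equiv.sum_comp (MulAction.toPerm g)
            (fun k => μ (g⁻¹ • k) * fObj c d k P)]
          exact Finset.sum_congr rfl fun k _ => by
            simp [MulAction.toPerm, inv_smul_smul]
  -- the averaged objects
  set N : ℝ := (Fintype.card G : ℝ) with hNdef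
  have hN : 0 < N := by
    rw [hNdef]
    exact_mod_cast Fintype.card_pos
  set μbar : Fin K → ℝ := fun k => N⁻¹ * ∑ g : G, μs (g • k) with hμbar
  set Pbar : Fin M → Matrix n n ℂ := fun m => N⁻¹ • ∑ g : G, kappa U g Ps m with hPbar
  -- trace against a real-scaled sum
  have pair_smul : ∀ (A : Matrix n n ℂ) (Q : G → Matrix n n ℂ),
      ((A * (N⁻¹ • ∑ g : G, Q g)).trace).re = N⁻¹ * ∑ g : G, ((A * Q g).trace).re := by
    intro A Q
    rw [mul_smul_comm, Matrix.trace_smul, Complex.smul_re, smul_eq_mul]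
    congr 1
    rw [Finset.mul_sum, Matrix.trace_sum, Complex.re_sum]
  -- Pbar is feasible
  have Pbar_feas : Feasible a b Pbar := by
    refine ⟨⟨?_, ?_⟩, ?_⟩
    · intro m
      apply posSemidef_real_smul (le_of_lt (inv_pos.mpr hN))
      apply Finset.sum_induction _ _ (fun x y hx hy => hx.add hy)
      · exact Matrix.PosSemidef.zero
      · intro g _
        exact ((kappa_feas g Ps ⟨⟨hFPs.1.1, hFPs.1.2⟩, hFPs.2⟩).1.1) m
    · rw [show (∑ m, Pbar m) = N⁻¹ • ∑ g : G, ∑ m, kappa U g Ps m by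
        rw [hPbar, ← Finset.smul_sum, Finset.sum_comm]]
      have h1 : ∀ g : G, (∑ m, kappa U g Ps m) = 1 := fun g =>
        (kappa_feas g Ps ⟨⟨hFPs.1.1, hFPs.1.2⟩, hFPs.2⟩).1.2
      rw [Finset.sum_congr rfl fun g _ => h1 g, Finset.sum_const, Finset.card_univ,
        ← Nat.cast_smul_eq_nsmul ℝ, ← hNdef, smul_smul, inv_mul_cancel₀ hN.ne', one_smul]
    · intro j
      have hterm : ∀ m : Fin M, ((a j m * Pbar m).trace).re
          = N⁻¹ * ∑ g : G, ((a j m * kappa U g Ps m).trace).re := fun m =>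
        pair_smul (a j m) (fun g => kappa U g Ps m)
      calc ∑ m, ((a j m * Pbar m).trace).re
          = N⁻¹ * ∑ g : G, ∑ m, ((a j m * kappa U g Ps m).trace).re := by
            rw [Finset.sum_congr rfl fun m _ => hterm m, ← Finset.mul_sum, Finset.sum_comm]
        _ ≤ N⁻¹ * ∑ g : G, b j := by
            apply mul_le_mul_of_nonneg_left _ (le_of_lt (inv_pos.mpr hN))
            apply Finset.sum_le_sum
            intro g _
            exact (kappa_feas g Ps ⟨⟨hFPs.1.1, hFPs.1.2⟩, hFPs.2⟩).2 j
        _ = b j := by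
            rw [Finset.sum_const, Finset.card_univ, nsmul_eq_mul, ← mul_assoc,
              ← hNdef, inv_mul_cancel₀ hN.ne', one_mul]
  -- μbar is a simplex element
  have μbar_simplex : Simplex μbar := by
    constructor
    · intro k
      apply mul_nonneg (le_of_lt (inv_pos.mpr hN))
      exact Finset.sum_nonneg fun g _ => hSμ.1 _
    · rw [hμbar]
      calc ∑ k, N⁻¹ * ∑ g : G, μs (g • k)
          = N⁻¹ * ∑ g : G, ∑ k, μs (g • k) := by
            rw [← Finset.mul_sum, Finset.sum_comm]
        _ = N⁻¹ * ∑ g : G, (1:ℝ) := by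
            congr 1
            exact Finset.sum_congr rfl fun g _ =>
              (Equiv.sum_comp (MulAction.toPerm g) μs).trans hSμ.2
        _ = 1 := by
            rw [Finset.sum_const, Finset.card_univ, nsmul_eq_mul, mul_one,
              ← hNdef, inv_mul_cancel₀ hN.ne']
  -- upper bound: F(μbar, P) ≤ v for feasible P
  have hub : ∀ (g : G) (P : Fin M → Matrix n n ℂ), Feasible a b P →
      FObj c d (fun k => μs (g • k)) P ≤ v := by
    intro g P hP
    have h : FObj c d (fun k => μs (g • k)) P = FObj c d μs (kappa U g⁻¹ P) := by
      rw [FObj_kappa g⁻¹ μs P]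
      simp [inv_inv]
    rw [h]
    exact hmax _ (kappa_feas g⁻¹ P hP)
  have μbar_le : ∀ (P : Fin M → Matrix n n ℂ), Feasible a b P →
      FObj c d μbar P ≤ v := by
    intro P hP
    have h : FObj c d μbar P = N⁻¹ * ∑ g : G, FObj c d (fun k => μs (g • k)) P := by
      unfold FObj
      have hterm : ∀ k : Fin K, μbar k * fObj c d k P
          = ∑ g : G, N⁻¹ * (μs (g • k) * fObj c d k P) := by
        intro k
        simp only [hμbar]
        rw [mul_assoc, Finset.sum_mul, Finset.mul_sum]
      calc ∑ k, μbar k * fObj c d k P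
          = ∑ k, ∑ g : G, N⁻¹ * (μs (g • k) * fObj c d k P) :=
            Finset.sum_congr rfl fun k _ => hterm k
        _ = ∑ g : G, ∑ k, N⁻¹ * (μs (g • k) * fObj c d k P) := Finset.sum_comm
        _ = N⁻¹ * ∑ g : G, ∑ k, (fun k => μs (g • k)) k * fObj c d k P := by
            rw [Finset.mul_sum]
            exact Finset.sum_congr rfl fun g _ => (Finset.mul_sum _ _ _).symm
    rw [h]
    calc N⁻¹ * ∑ g : G, FObj c d (fun k => μs (g • k)) P
        ≤ N⁻¹ * ∑ g : G, v := by
          apply mul_le_mul_of_nonneg_left _ (le_of_lt (inv_pos.mpr hN))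
          exact Finset.sum_le_sum fun g _ => hub g P hP
      _ = v := by
          rw [Finset.sum_const, Finset.card_univ, nsmul_eq_mul, ← mul_assoc,
            ← hNdef, inv_mul_cancel₀ hN.ne', one_mul]
  -- lower bound: v ≤ F(μ, Pbar) for simplex μ
  have hlb : ∀ (g : G) (μ : Fin K → ℝ), Simplex μ → v ≤ FObj c d μ (kappa U g Ps) := by
    intro g μ hμ
    rw [FObj_kappa g μ Ps]
    exact hmin _ (simplex_shift g⁻¹ μ hμ)
  have Pbar_ge : ∀ (μ : Fin K → ℝ), Simplex μ → v ≤ FObj c d μ Pbar := by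
    intro μ hμ
    have hf : ∀ k : Fin K, fObj c d k Pbar = N⁻¹ * ∑ g : G, fObj c d k (kappa U g Ps) := by
      intro k
      unfold fObj
      rw [Finset.sum_congr rfl fun m (_ : m ∈ Finset.univ) =>
        pair_smul (c k m) (fun g => kappa U g Ps m)]
      rw [← Finset.mul_sum, Finset.sum_comm]
      have : ∑ g : G, (∑ m, ((c k m * kappa U g Ps m).trace).re + d k)
          = (∑ g : G, ∑ m, ((c k m * kappa U g Ps m).trace).re) + N * d k := by
        rw [Finset.sum_add_distrib, Finset.sum_const, Finset.card_univ, nsmul_eq_mul, hNdef]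
      rw [this, mul_add, ← mul_assoc, inv_mul_cancel₀ hN.ne', one_mul]
    have h : FObj c d μ Pbar = N⁻¹ * ∑ g : G, FObj c d μ (kappa U g Ps) := by
      unfold FObj
      have hterm : ∀ k : Fin K, μ k * fObj c d k Pbar
          = ∑ g : G, N⁻¹ * (μ k * fObj c d k (kappa U g Ps)) := by
        intro k
        rw [hf k, Finset.mul_sum, Finset.mul_sum]
        exact Finset.sum_congr rfl fun g _ => by ring
      calc ∑ k, μ k * fObj c d k Pbar
          = ∑ k, ∑ g : G, N⁻¹ * (μ k * fObj c d k (kappa U g Ps)) :=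
            Finset.sum_congr rfl fun k _ => hterm k
        _ = ∑ g : G, ∑ k, N⁻¹ * (μ k * fObj c d k (kappa U g Ps)) := Finset.sum_comm
        _ = N⁻¹ * ∑ g : G, ∑ k, μ k * fObj c d k (kappa U g Ps) := by
            rw [Finset.mul_sum]
            exact Finset.sum_congr rfl fun g _ => (Finset.mul_sum _ _ _).symm
    rw [h]
    calc v = N⁻¹ * ∑ g : G, v := by
          rw [Finset.sum_const, Finset.card_univ, nsmul_eq_mul, ← mul_assoc,
            ← hNdef, inv_mul_cancel₀ hN.ne', one_mul]
      _ ≤ N⁻¹ * ∑ g : G, FObj c d μ (kappa U g Ps) := by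
          apply mul_le_mul_of_nonneg_left _ (le_of_lt (inv_pos.mpr hN))
          exact Finset.sum_le_sum fun g _ => hlb g μ hμ
  -- value at the averaged pair
  have hval : FObj c d μbar Pbar = v :=
    le_antisymm (μbar_le Pbar Pbar_feas) (Pbar_ge μbar μbar_simplex)
  -- covariance of μbar
  have μbar_cov : ∀ (g : G) (k : Fin K), μbar k = μbar (g • k) := by
    intro g k
    simp only [hμbar]
    congr 1
    calc ∑ g' : G, μs (g' • k)
        = ∑ g' : G, μs ((g' * g) • k) :=
          (Equiv.sum_comp (Equiv.mulRight g) (fun g' => μs (g' • k))).symm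
      _ = ∑ g' : G, μs (g' • g • k) :=
          Finset.sum_congr rfl fun g' _ => by rw [mul_smul]
  -- covariance of Pbar
  have hconj_kappa : ∀ (h g : G) (m : Fin M),
      conjAct U h (kappa U (g * h) Ps m) = kappa U g Ps (h • m) := by
    intro h g m
    unfold conjAct kappa
    have hmul : (U (g * h) : Matrix n n ℂ) = (U g : Matrix n n ℂ) * (U h : Matrix n n ℂ) := by
      rw [_root_.map_mul]; rfl
    have h1 : ∀ X : Matrix n n ℂ, (U h : Matrix n n ℂ) * (star (U h : Matrix n n ℂ) * X) = X :=
      fun X => by rw [← mul_assoc, hmul_star h, one_mul]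
    rw [hmul, mul_smul]
    simp only [StarMul.star_mul, mul_assoc, h1, hmul_star h, mul_one]
  have Pbar_cov : ∀ (h : G) (m : Fin M), conjAct U h (Pbar m) = Pbar (h • m) := by
    intro h m
    have hdist : conjAct U h (Pbar m)
        = N⁻¹ • ∑ g : G, conjAct U h (kappa U g Ps m) := by
      unfold conjAct
      rw [hPbar]
      simp only [Finset.mul_sum, Finset.sum_mul, mul_smul_comm, Matrix.smul_mul]
    rw [hdist]
    have : ∑ g : G, conjAct U h (kappa U g Ps m) = ∑ g : G, kappa U g Ps (h • m) := by
      calc ∑ g : G, conjAct U h (kappa U g Ps m)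
          = ∑ g : G, conjAct U h (kappa U (g * h) Ps m) :=
            (Equiv.sum_comp (Equiv.mulRight h)
              (fun g => conjAct U h (kappa U g Ps m))).symm
        _ = ∑ g : G, kappa U g Ps (h • m) :=
            Finset.sum_congr rfl fun g _ => hconj_kappa h g m
    rw [this, hPbar]
  exact ⟨μbar, Pbar,
    ⟨μbar_simplex, Pbar_feas,
      fun P hP => (μbar_le P hP).trans_eq hval.symm,
      fun μ hμ => hval.le.trans (Pbar_ge μ hμ)⟩,
    μbar_cov, Pbar_cov⟩
end
end

section
/- Appendix claim (dual bound without the Born rule): let p : Fin M → (Matrix n n ℂ → ℝ) be a family of ℝ-linear functionals on Hermitian matrices such that p m A ≥ 0 whenever A is positive semidefinite, and ∑_{m<M} p m A = Re(Tr A) for every Hermitian A. Suppose ∑_{m<M} p m (a j m) ≤ b j for all j ∈ Fin J. Then for every λ : Fin J → ℝ with λ j ≥ 0 and every Hermitian X with X - z m λ positive semidefinite for all m, one has ∑_{m<M} p m (c m) ≤ Re(Tr X) + ∑_{j<J} λ j * b j. -/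
open Matrix Complex
open scoped ComplexOrder

noncomputable section

/-- Appendix claim: the dual value bounds the objective `∑ m, p m (c m)` for any family
of outcome functionals `p` that are ℝ-linear on Hermitian matrices, nonnegative on
positive semidefinite matrices, sum to the (real part of the) trace, and satisfy the
constraints, without invoking the Born rule. -/
theorem dual_bound_without_born_rule
    {n : Type*} [Fintype n] [DecidableEq n] [Nonempty n]
    {M J : ℕ}
    (c : Fin M → Matrix n n ℂ) (a : Fin J → Fin M → Matrix n n ℂ) (b : Fin J → ℝ)
    (hc : ∀ m, (c m).IsHermitian) (ha : ∀ j m, (a j m).IsHermitian)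
    (p : Fin M → Matrix n n ℂ → ℝ)
    (hlin : ∀ (m : Fin M) (s t : ℝ) (A B : Matrix n n ℂ), A.IsHermitian → B.IsHermitian →
      p m (s • A + t • B) = s * p m A + t * p m B)
    (hpos : ∀ (m : Fin M) (A : Matrix n n ℂ), A.PosSemidef → 0 ≤ p m A)
    (hsum : ∀ A : Matrix n n ℂ, A.IsHermitian → ∑ m, p m A = A.trace.re)
    (hfeas : ∀ j, ∑ m, p m (a j m) ≤ b j)
    (lam : Fin J → ℝ) (hlam : ∀ j, 0 ≤ lam j)
    (X : Matrix n n ℂ) (hX : X.IsHermitian)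
    (hXz : ∀ m, (X - zOp c a lam m).PosSemidef) :
    ∑ m, p m (c m) ≤ X.trace.re + ∑ j, lam j * b j := by
  -- basic linearity consequences
  have hzero : ∀ m, p m 0 = 0 := by
    intro m
    have := hlin m 0 0 0 0 isHermitian_zero isHermitian_zero
    simpa using this
  have padd : ∀ (m : Fin M) (A B : Matrix n n ℂ), A.IsHermitian → B.IsHermitian →
      p m (A + B) = p m A + p m B := by
    intro m A B hA hB
    have := hlin m 1 1 A B hA hB
    simpa using this
  have psmul : ∀ (m : Fin M) (r : ℝ) (A : Matrix n n ℂ), A.IsHermitian →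
      p m ((r : ℂ) • A) = r * p m A := by
    intro m r A hA
    have := hlin m r 0 A 0 hA isHermitian_zero
    simpa using this
  have hsmulH : ∀ (j : Fin J) (m : Fin M), ((lam j : ℂ) • a j m).IsHermitian := by
    intro j m
    unfold Matrix.IsHermitian
    rw [Matrix.conjTranspose_smul, (ha j m).eq]
    simp
  have hSH : ∀ m, (∑ j, (lam j : ℂ) • a j m).IsHermitian := by
    intro m
    unfold Matrix.IsHermitian
    rw [Matrix.conjTranspose_sum]
    exact Finset.sum_congr rfl fun j _ => (hsmulH j m).eq
  have hsumlin : ∀ (m : Fin M) (s : Finset (Fin J)),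
      (∑ j ∈ s, (lam j : ℂ) • a j m).IsHermitian ∧
      p m (∑ j ∈ s, (lam j : ℂ) • a j m) = ∑ j ∈ s, lam j * p m (a j m) := by
    intro m s
    induction s using Finset.induction_on with
    | empty => exact ⟨by simp [Matrix.IsHermitian], by simpa using hzero m⟩
    | insert _ _ hnot ih =>
      rename_i k t
      constructor
      · rw [Finset.sum_insert hnot]
        unfold Matrix.IsHermitian
        rw [Matrix.conjTranspose_add, (hsmulH k m).eq, ih.1.eq]
      · rw [Finset.sum_insert hnot, Finset.sum_insert hnot,
          padd m _ _ (hsmulH k m) ih.1, psmul m _ _ (ha k m), ih.2]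
  have key : ∀ m, p m (c m) ≤ p m X + ∑ j, lam j * p m (a j m) := by
    intro m
    set S := ∑ j, (lam j : ℂ) • a j m with hS
    have e : X + S = (X - zOp c a lam m) + c m := by
      simp only [zOp, hS]
      abel
    have e1 : p m X + p m S = p m (X - zOp c a lam m) + p m (c m) := by
      rw [← padd m X S hX (hSH m), e, padd m _ _ (hXz m).1 (hc m)]
    have h2 : 0 ≤ p m (X - zOp c a lam m) := hpos m _ (hXz m)
    have h3 : p m S = ∑ j, lam j * p m (a j m) := (hsumlin m Finset.univ).2
    linarith
  calc ∑ m, p m (c m) ≤ ∑ m, (p m X + ∑ j, lam j * p m (a j m)) :=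
        Finset.sum_le_sum fun m _ => key m
    _ = X.trace.re + ∑ j, lam j * ∑ m, p m (a j m) := by
        rw [Finset.sum_add_distrib, hsum X hX, Finset.sum_comm]
        simp [Finset.mul_sum]
    _ ≤ X.trace.re + ∑ j, lam j * b j := by
        gcongr with j
        · exact hlam j
        · exact hfeas j
end
end

section
/- Dual of the Bayes problem (Example 1 of Table I, instance of Theorem 1): given positive semidefinite Hermitian matrices W m (m ∈ Fin R) with R ≥ 1, the infimum over POVMs Π (with R outcomes) of ∑_{m<R} Re(Tr(W m * Π m)) equals the supremum of Re(Tr X) over Hermitian matrices X such that W m - X is positive semidefinite for every m ∈ Fin R. -/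
open Matrix Complex
open scoped ComplexOrder

noncomputable section

namespace BayesDualAux

attribute [local instance] Matrix.normedAddCommGroup Matrix.normedSpace

variable {n : Type*} [Fintype n] [DecidableEq n] {R : ℕ}

lemma re_trace_conjTranspose_mul_self_nonneg (M : Matrix n n ℂ) :
    0 ≤ ((Mᴴ * M).trace).re := by
  rw [Matrix.trace]
  simp only [Matrix.diag_apply, Matrix.mul_apply, Matrix.conjTranspose_apply]
  rw [Complex.re_sum]
  refine Finset.sum_nonneg fun j _ => ?_
  rw [Complex.re_sum]
  refine Finset.sum_nonneg fun i _ => ?_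
  have : star (M i j) * M i j = ((Complex.normSq (M i j) : ℝ) : ℂ) := by
    rw [Complex.star_def, Complex.normSq_eq_conj_mul_self]
  rw [this]
  simp [Complex.normSq_nonneg]

lemma re_trace_mul_nonneg {A B : Matrix n n ℂ} (hA : A.PosSemidef) (hB : B.PosSemidef) :
    0 ≤ ((A * B).trace).re := by
  obtain ⟨k, v, rfl⟩ := Matrix.posSemidef_iff_eq_sum_vecMulVec.mp hB
  rw [Finset.mul_sum, Matrix.trace_sum, Complex.re_sum]
  refine Finset.sum_nonneg fun i _ => ?_
  have e : (A * vecMulVec (v i) (star (v i))).trace = star (v i) ⬝ᵥ (A *ᵥ v i) := by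
    simp only [Matrix.trace, Matrix.diag_apply, Matrix.mul_apply, vecMulVec_apply,
      dotProduct, Matrix.mulVec, Pi.star_apply, Finset.mul_sum]
    congr 1; ext a; congr 1; ext b; ring
  rw [e]
  exact (Complex.nonneg_iff.mp (hA.dotProduct_mulVec_nonneg (v i))).1

lemma vecMulVec_posSemidef (v : n → ℂ) : (vecMulVec v (star v)).PosSemidef := by
  rw [posSemidef_iff_dotProduct_mulVec]
  constructor
  · ext i j
    simp [vecMulVec_apply, Matrix.conjTranspose_apply, mul_comm]
  · intro x
    have h : star x ⬝ᵥ (vecMulVec v (star v)) *ᵥ x = star (star v ⬝ᵥ x) * (star v ⬝ᵥ x) := by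
      simp only [Matrix.mulVec, dotProduct, vecMulVec_apply, Pi.star_apply]
      simp only [Finset.mul_sum, Finset.sum_mul, star_sum, star_mul']
      rw [Finset.sum_comm]
      congr 1; ext i; congr 1; ext j
      simp [Pi.star_apply]
      ring_nf
    rw [h]
    exact star_mul_self_nonneg _

lemma trace_mul_vecMulVec (A : Matrix n n ℂ) (v : n → ℂ) :
    (A * vecMulVec v (star v)).trace = star v ⬝ᵥ (A *ᵥ v) := by
  simp only [Matrix.trace, Matrix.diag_apply, Matrix.mul_apply, vecMulVec_apply,
    dotProduct, Matrix.mulVec, Pi.star_apply]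
  congr 1; ext i
  rw [Finset.mul_sum]
  congr 1; ext j
  ring

lemma isHermitian_quad_real {A : Matrix n n ℂ} (hA : A.IsHermitian) (v : n → ℂ) :
    (star v ⬝ᵥ (A *ᵥ v)).im = 0 := by
  have h : star (star v ⬝ᵥ (A *ᵥ v)) = star v ⬝ᵥ (A *ᵥ v) := by
    nth_rewrite 2 [← hA.eq]
    rw [Matrix.star_dotProduct, star_star, Matrix.star_mulVec, Matrix.dotProduct_mulVec]
  have h2 := congrArg Complex.im h
  simp only [Complex.star_def, Complex.conj_im] at h2
  linarith

lemma posSemidef_of_re_trace {A : Matrix n n ℂ} (hA : A.IsHermitian)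
    (h : ∀ B : Matrix n n ℂ, B.PosSemidef → 0 ≤ ((A * B).trace).re) : A.PosSemidef := by
  refine posSemidef_iff_dotProduct_mulVec.mpr ⟨hA, fun v => ?_⟩
  have h1 := h _ (vecMulVec_posSemidef v)
  rw [trace_mul_vecMulVec] at h1
  rw [Complex.nonneg_iff]
  exact ⟨h1, (isHermitian_quad_real hA v).symm⟩

lemma trace_mul_stdBasisMatrix (Y : Matrix n n ℂ) (k i : n) (c : ℂ) :
    ((Y * Matrix.single k i c).trace) = Y i k * c := by
  simp only [Matrix.trace, Matrix.diag_apply, Matrix.mul_apply, Matrix.single, Matrix.of_apply]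
  rw [Finset.sum_comm]
  simp [ite_and, Finset.sum_ite_eq, mul_comm]

lemma exists_rep (g : Matrix n n ℂ →ₗ[ℝ] ℝ) :
    ∃ Y : Matrix n n ℂ, ∀ M : Matrix n n ℂ, g M = ((Y * M).trace).re := by
  refine ⟨Matrix.of fun i k =>
    ⟨g (Matrix.single k i 1), -g (Complex.I • Matrix.single k i 1)⟩, fun M => ?_⟩
  set Y : Matrix n n ℂ := Matrix.of fun i k =>
    (⟨g (Matrix.single k i 1), -g (Complex.I • Matrix.single k i 1)⟩ : ℂ) with hY
  have key : ∀ (k i : n) (c : ℂ),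
      g (Matrix.single k i c) = ((Y * Matrix.single k i c).trace).re := by
    intro k i c
    rw [trace_mul_stdBasisMatrix]
    have hdecomp : Matrix.single k i c
        = (c.re : ℝ) • Matrix.single k i 1 + (c.im : ℝ) • (Complex.I • Matrix.single k i 1) := by
      rw [smul_single, smul_single, smul_single, ← Matrix.single_add]
      congr 1
      simp [Complex.real_smul, Complex.ext_iff]
    rw [hdecomp, map_add, _root_.map_smul, _root_.map_smul]
    simp only [hY, Matrix.of_apply]
    simp [Complex.mul_re]
    ring
  have hM : M = ∑ k : n, ∑ i : n, Matrix.single k i (M k i) := matrix_eq_sum_single M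
  calc g M = ∑ k : n, ∑ i : n, g (Matrix.single k i (M k i)) := by
        conv_lhs => rw [hM]
        rw [map_sum]
        simp_rw [map_sum]
    _ = ∑ k : n, ∑ i : n, ((Y * Matrix.single k i (M k i)).trace).re := by
        simp_rw [key]
    _ = ((Y * M).trace).re := by
        nth_rewrite 2 [hM]
        rw [Finset.mul_sum, Matrix.trace_sum, Complex.re_sum]
        congr 1; ext k
        rw [Finset.mul_sum, Matrix.trace_sum, Complex.re_sum]

lemma psd_real_smul {P : Matrix n n ℂ} (hP : P.PosSemidef) {r : ℝ} (hr : 0 ≤ r) :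
    (r • P).PosSemidef := by
  rw [posSemidef_iff_dotProduct_mulVec]
  constructor
  · ext i j
    simp [Matrix.conjTranspose_apply, star_smul, hP.1.apply i j]
  · intro x
    rw [Matrix.smul_mulVec, dotProduct_smul]
    exact smul_nonneg hr (hP.dotProduct_mulVec_nonneg x)

lemma diag_re_nonneg {P : Matrix n n ℂ} (hP : P.PosSemidef) (i : n) : 0 ≤ (P i i).re := by
  have := hP.dotProduct_mulVec_nonneg (Pi.single i 1)
  rw [Complex.nonneg_iff] at this
  simpa [Matrix.mulVec_single, dotProduct, Pi.single_apply] using this.1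

lemma re_trace_nonneg' {P : Matrix n n ℂ} (hP : P.PosSemidef) : 0 ≤ (P.trace).re := by
  rw [Matrix.trace, Complex.re_sum]
  exact Finset.sum_nonneg fun i _ => diag_re_nonneg hP i

lemma single_quad (P : Matrix n n ℂ) (a b : n) (c d : ℂ) :
    Pi.single a c ⬝ᵥ P *ᵥ Pi.single b d = c * (P a b * d) := by
  classical
  simp [dotProduct, Matrix.mulVec, Pi.single_apply, Finset.mul_sum,
    apply_ite, Finset.sum_ite_eq', star_zero]

lemma abs_entry_le_re_trace {P : Matrix n n ℂ} (hP : P.PosSemidef) (i j : n) :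
    ‖P i j‖ ≤ (P.trace).re := by
  have hdiag : ∀ k, 0 ≤ (P k k).re := diag_re_nonneg hP
  have htr : ∀ k, (P k k).re ≤ (P.trace).re := by
    intro k
    rw [Matrix.trace, Complex.re_sum]
    exact Finset.single_le_sum (fun l _ => hdiag l) (Finset.mem_univ k)
  by_cases hc : P i j = 0
  · simp [hc]
    exact re_trace_nonneg' hP
  by_cases hij : i = j
  · subst hij
    have h0 := hP.dotProduct_mulVec_nonneg (Pi.single i 1)
    rw [Complex.nonneg_iff] at h0
    have him : (P i i).im = 0 := by
      have := h0.2
      simpa [Matrix.mulVec_single, dotProduct, Pi.single_apply] using this.symm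
    have habs : ‖P i i‖ = (P i i).re := by
      rw [Complex.norm_def, Complex.normSq_apply, him]
      simpa using Real.sqrt_mul_self (hdiag i)
    rw [habs]; exact htr i
  · set c := P i j with hc'
    set a : ℝ := ‖c‖ with ha'
    have ha : (a : ℂ) ≠ 0 := by
      simp [ha']
      exact hc
    set u : ℂ := c / (a : ℂ) with hu
    set x : n → ℂ := Pi.single j 1 - Pi.single i u with hx
    have hsc : star c * c = ((a : ℂ))^2 := by
      rw [Complex.star_def, ← Complex.normSq_eq_conj_mul_self]
      rw [ha', ← Complex.sq_norm]
      push_cast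
      ring
    have h1 : P j i * u = (a : ℂ) := by
      have hji : P j i = star c := by
        rw [hc', ← hP.1.apply i j, star_star]
      rw [hji, hu, mul_div_assoc']
      rw [hsc]
      field_simp
      try ring
    have h2 : star u * c = (a : ℂ) := by
      rw [hu, star_div₀, Complex.star_def, Complex.conj_ofReal, div_mul_eq_mul_div,
        ← Complex.star_def, hsc]
      field_simp
      try ring
    have h3 : star u * (P i i * u) = P i i := by
      have : star u * u = 1 := by
        rw [hu, star_div₀, Complex.star_def, Complex.conj_ofReal, div_mul_div_comm,
          ← Complex.star_def, hsc]
        field_simp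
        try ring
      calc star u * (P i i * u) = P i i * (star u * u) := by ring
        _ = P i i := by rw [this, mul_one]
    have hquad := hP.dotProduct_mulVec_nonneg x
    have hexp : star x ⬝ᵥ P *ᵥ x =
        P j j - (a : ℂ) - ((a : ℂ) - P i i) := by
      rw [hx, star_sub, Matrix.mulVec_sub, sub_dotProduct, dotProduct_sub,
        dotProduct_sub]
      simp only [← Pi.single_star]
      rw [single_quad, single_quad, single_quad, single_quad]
      simp only [star_one, one_mul, mul_one]
      rw [h1, h2, h3]
    rw [hexp, Complex.nonneg_iff] at hquad
    have hre := hquad.1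
    simp only [Complex.sub_re, Complex.ofReal_re] at hre
    have := htr i
    have := htr j
    show a ≤ P.trace.re
    linarith

lemma re_trace_conjTranspose_mul {X Q : Matrix n n ℂ} (hQ : Q.IsHermitian) :
    ((Xᴴ * Q).trace).re = ((X * Q).trace).re := by
  have : (Xᴴ * Q).trace = star ((X * Q).trace) := by
    nth_rewrite 1 [← hQ.eq]
    rw [← Matrix.conjTranspose_mul, Matrix.trace_conjTranspose, Matrix.trace_mul_comm]
  rw [this]
  simp [Complex.star_def]

lemma retrace_mul_smul (A M : Matrix n n ℂ) (t : ℝ) :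
    ((A * (t • M)).trace).re = t * ((A * M).trace).re := by
  rw [mul_smul_comm, Matrix.trace_smul]
  simp [Complex.real_smul]

lemma isClosed_primal_image (W : Fin R → Matrix n n ℂ) :
    IsClosed {q : Matrix n n ℂ × ℝ | ∃ P : Fin R → Matrix n n ℂ,
      (∀ m, (P m).PosSemidef) ∧ (∑ m, P m) = q.1 ∧ (∑ m, ((W m * P m).trace).re) = q.2} := by
  have hretr : Continuous fun M : Matrix n n ℂ => (M.trace).re := by
    apply Complex.continuous_re.comp
    unfold Matrix.trace
    exact continuous_finset_sum _ fun i _ => (continuous_apply i).comp (continuous_apply i)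
  have hsumc : Continuous fun P : Fin R → Matrix n n ℂ => ∑ m, P m :=
    continuous_finset_sum _ fun m _ => continuous_apply m
  have hquadc : ∀ v : n → ℂ, Continuous fun M : Matrix n n ℂ => star v ⬝ᵥ M *ᵥ v := by
    intro v
    simp only [Matrix.mulVec, dotProduct]
    refine continuous_finset_sum _ fun i _ => Continuous.mul continuous_const ?_
    exact continuous_finset_sum _ fun j _ =>
      Continuous.mul (f := fun M : Matrix n n ℂ => M i j)
        ((continuous_apply j).comp (continuous_apply i)) continuous_const
  have htrmulc : ∀ A : Matrix n n ℂ, Continuous fun M : Matrix n n ℂ => ((A * M).trace).re := by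
    intro A
    apply Complex.continuous_re.comp
    have he : (fun M : Matrix n n ℂ => (A * M).trace)
        = fun M => ∑ i, ∑ k, A i k * M k i := by
      ext M
      simp [Matrix.trace, Matrix.mul_apply]
    rw [he]
    refine continuous_finset_sum _ fun i _ => continuous_finset_sum _ fun k _ =>
      Continuous.mul continuous_const ((continuous_apply i).comp (continuous_apply k))
  have hcostc : Continuous fun P : Fin R → Matrix n n ℂ => ∑ m, ((W m * P m).trace).re :=
    continuous_finset_sum _ fun m _ => (htrmulc (W m)).comp (continuous_apply m)
  haveI : SequentialSpace (Matrix n n ℂ × ℝ) :=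
    inferInstanceAs (SequentialSpace ((n → n → ℂ) × ℝ))
  apply IsSeqClosed.isClosed
  intro x q hx hq
  choose P hPSD hsum hcost using hx
  have hq1 : Filter.Tendsto (fun k => (x k).1) Filter.atTop (nhds q.1) :=
    (continuous_fst.tendsto q).comp hq
  have hq2 : Filter.Tendsto (fun k => (x k).2) Filter.atTop (nhds q.2) :=
    (continuous_snd.tendsto q).comp hq
  have htb : Filter.Tendsto (fun k => (((x k).1).trace).re) Filter.atTop (nhds ((q.1.trace).re)) :=
    (hretr.tendsto q.1).comp hq1
  obtain ⟨B, hB⟩ := htb.bddAbove_range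
  set B' : ℝ := max B 0 with hB'
  have hPB : ∀ k, P k ∈ Metric.closedBall (0 : Fin R → Matrix n n ℂ) B' := by
    intro k
    rw [Metric.mem_closedBall, dist_zero_right]
    rw [pi_norm_le_iff_of_nonneg (le_max_right _ _)]
    intro m
    rw [Matrix.norm_le_iff (le_max_right _ _)]
    intro i j
    have h1 : ‖P k m i j‖ ≤ ((P k m).trace).re :=
      abs_entry_le_re_trace (hPSD k m) i j
    have h2 : ((P k m).trace).re ≤ (((x k).1).trace).re := by
      rw [← hsum k, Matrix.trace_sum, Complex.re_sum]
      exact Finset.single_le_sum (fun l _ => re_trace_nonneg' (hPSD k l)) (Finset.mem_univ m)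
    have h3 : (((x k).1).trace).re ≤ B := hB ⟨k, rfl⟩
    calc ‖P k m i j‖ = ‖P k m i j‖ := rfl
      _ ≤ B := by linarith
      _ ≤ B' := le_max_left _ _
  obtain ⟨L, _, φ, hφ, hLP⟩ :=
    tendsto_subseq_of_bounded Metric.isBounded_closedBall (x := P) hPB
  have hLm : ∀ m, Filter.Tendsto (fun k => P (φ k) m) Filter.atTop (nhds (L m)) :=
    fun m => ((continuous_apply m).tendsto L).comp hLP
  refine ⟨L, fun m => ?_, ?_, ?_⟩
  · have hent : ∀ i j, Filter.Tendsto (fun k => P (φ k) m i j) Filter.atTop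
        (nhds (L m i j)) := by
      intro i j
      have h1 := (tendsto_pi_nhds.mp (hLm m)) i
      exact (tendsto_pi_nhds.mp h1) j
    rw [posSemidef_iff_dotProduct_mulVec]
    constructor
    · ext i j
      have e2 : Filter.Tendsto (fun k => star (P (φ k) m j i)) Filter.atTop
          (nhds (star (L m j i))) :=
        ((continuous_star.tendsto _).comp (hent j i)).congr (fun k => rfl)
      have e2' := e2.congr (fun k => (hPSD (φ k) m).1.apply i j)
      exact tendsto_nhds_unique e2' (hent i j)
    · intro v
      have hqt : Filter.Tendsto (fun k => star v ⬝ᵥ (P (φ k) m) *ᵥ v) Filter.atTop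
          (nhds (star v ⬝ᵥ (L m) *ᵥ v)) := ((hquadc v).tendsto (L m)).comp (hLm m)
      rw [Complex.nonneg_iff]
      constructor
      · refine ge_of_tendsto' ((Complex.continuous_re.tendsto _).comp hqt) fun k => ?_
        exact (Complex.nonneg_iff.mp ((hPSD (φ k) m).dotProduct_mulVec_nonneg v)).1
      · have him : Filter.Tendsto (fun k => (star v ⬝ᵥ (P (φ k) m) *ᵥ v).im) Filter.atTop
            (nhds 0) :=
          (tendsto_const_nhds (x := (0:ℝ)) (α := ℕ) (f := Filter.atTop)).congr
            (fun k => (Complex.nonneg_iff.mp ((hPSD (φ k) m).dotProduct_mulVec_nonneg v)).2)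
        have him2 : Filter.Tendsto (fun k => (star v ⬝ᵥ (P (φ k) m) *ᵥ v).im) Filter.atTop
            (nhds ((star v ⬝ᵥ (L m) *ᵥ v).im)) :=
          ((Complex.continuous_im.tendsto _).comp hqt).congr (fun k => rfl)
        exact (tendsto_nhds_unique him2 him).symm
  · have t1 : Filter.Tendsto (fun k => ∑ m, P (φ k) m) Filter.atTop (nhds (∑ m, L m)) :=
      (hsumc.tendsto L).comp hLP
    have t2 : Filter.Tendsto (fun k => ∑ m, P (φ k) m) Filter.atTop (nhds q.1) :=
      (hq1.comp hφ.tendsto_atTop).congr (fun k => (hsum (φ k)).symm)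
    exact tendsto_nhds_unique t1 t2
  · have t1 : Filter.Tendsto (fun k => ∑ m, ((W m * P (φ k) m).trace).re) Filter.atTop
        (nhds (∑ m, ((W m * L m).trace).re)) := (hcostc.tendsto L).comp hLP
    have t2 : Filter.Tendsto (fun k => ∑ m, ((W m * P (φ k) m).trace).re) Filter.atTop
        (nhds q.2) :=
      (hq2.comp hφ.tendsto_atTop).congr (fun k => (hcost (φ k)).symm)
    exact tendsto_nhds_unique t1 t2

end BayesDualAux

section Main

open BayesDualAux

attribute [local instance] Matrix.normedAddCommGroup Matrix.normedSpace

/-- Dual of the Bayes problem: the minimum average Bayes cost over POVMs equals the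
maximum of `Re(Tr X)` over Hermitian `X` with `W m - X` positive semidefinite. -/
theorem bayes_dual
    {n : Type*} [Fintype n] [DecidableEq n] [Nonempty n]
    {R : ℕ} (hR : 1 ≤ R)
    (W : Fin R → Matrix n n ℂ) (hW : ∀ m, (W m).PosSemidef) :
    sInf ((fun P : Fin R → Matrix n n ℂ => ∑ m, ((W m * P m).trace).re) ''
        {P | (∀ m, (P m).PosSemidef) ∧ ∑ m, P m = 1}) =
      sSup ((fun X : Matrix n n ℂ => X.trace.re) ''
        {X | X.IsHermitian ∧ ∀ m, (W m - X).PosSemidef}) := by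
  set S := ((fun P : Fin R → Matrix n n ℂ => ∑ m, ((W m * P m).trace).re) ''
      {P | (∀ m, (P m).PosSemidef) ∧ ∑ m, P m = 1}) with hS
  set T := ((fun X : Matrix n n ℂ => X.trace.re) ''
      {X | X.IsHermitian ∧ ∀ m, (W m - X).PosSemidef}) with hT
  -- the canonical POVM
  set m0 : Fin R := ⟨0, hR⟩ with hm0
  set P₀ : Fin R → Matrix n n ℂ := fun m => if m = m0 then 1 else 0 with hP₀
  have hP₀psd : ∀ m, (P₀ m).PosSemidef := by
    intro m
    rw [hP₀]
    dsimp only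
    split_ifs
    · exact Matrix.PosSemidef.one
    · exact Matrix.PosSemidef.zero
  have hP₀sum : ∑ m, P₀ m = 1 := by
    rw [hP₀]
    simp [Finset.sum_ite_eq']
  set s₀ : ℝ := ∑ m, ((W m * P₀ m).trace).re with hs₀
  have hs₀S : s₀ ∈ S := ⟨P₀, ⟨hP₀psd, hP₀sum⟩, rfl⟩
  have hSne : S.Nonempty := ⟨s₀, hs₀S⟩
  have h0T : (0 : ℝ) ∈ T := by
    refine ⟨0, ⟨Matrix.isHermitian_zero, fun m => ?_⟩, by simp⟩
    simpa using hW m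
  have hTne : T.Nonempty := ⟨0, h0T⟩
  -- weak duality
  have hweak : ∀ s ∈ S, ∀ t ∈ T, t ≤ s := by
    rintro s ⟨P, ⟨hPpsd, hPsum⟩, rfl⟩ t ⟨X, ⟨hXh, hXfeas⟩, rfl⟩
    have h1 : ∀ m, 0 ≤ (((W m - X) * P m).trace).re :=
      fun m => re_trace_mul_nonneg (hXfeas m) (hPpsd m)
    have h2 : ∀ m, (((W m - X) * P m).trace).re
        = ((W m * P m).trace).re - ((X * P m).trace).re := by
      intro m
      rw [Matrix.sub_mul, Matrix.trace_sub, Complex.sub_re]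
    have h3 : ∑ m, ((X * P m).trace).re = X.trace.re := by
      rw [← Complex.re_sum, ← Matrix.trace_sum, ← Finset.mul_sum, hPsum, mul_one]
    have h4 : 0 ≤ ∑ m, (((W m - X) * P m).trace).re :=
      Finset.sum_nonneg fun m _ => h1 m
    rw [Finset.sum_congr rfl fun m _ => h2 m, Finset.sum_sub_distrib, h3] at h4
    linarith
  have hSbdd : BddBelow S := ⟨0, fun s hs => hweak s hs 0 h0T⟩
  have hTbdd : BddAbove T := ⟨s₀, fun t ht => hweak s₀ hs₀S t ht⟩
  set p : ℝ := sInf S with hp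
  refine le_antisymm ?_ (le_csInf hSne fun s hs => csSup_le hTne fun t ht => hweak s hs t ht)
  -- strong duality
  refine le_of_forall_pos_le_add fun ε hε => ?_
  set C : Set (Matrix n n ℂ × ℝ) := {q : Matrix n n ℂ × ℝ | ∃ P : Fin R → Matrix n n ℂ,
      (∀ m, (P m).PosSemidef) ∧ (∑ m, P m) = q.1 ∧ (∑ m, ((W m * P m).trace).re) = q.2}
      with hC
  have hCclosed : IsClosed C := isClosed_primal_image W
  have hCconv : Convex ℝ C := by
    rintro y ⟨P, hPp, hy1, hy2⟩ z ⟨Q, hQp, hz1, hz2⟩ a b ha hb hab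
    refine ⟨fun m => a • P m + b • Q m,
      fun m => Matrix.PosSemidef.add (psd_real_smul (hPp m) ha) (psd_real_smul (hQp m) hb),
      ?_, ?_⟩
    · rw [Finset.sum_add_distrib, ← Finset.smul_sum, ← Finset.smul_sum, hy1, hz1]
      simp [Prod.fst_add, Prod.smul_fst]
    · have hpt : ∀ m, ((W m * (a • P m + b • Q m)).trace).re
          = a * ((W m * P m).trace).re + b * ((W m * Q m).trace).re := by
        intro m
        rw [mul_add, Matrix.trace_add, Complex.add_re, retrace_mul_smul, retrace_mul_smul]
      rw [Finset.sum_congr rfl fun m _ => hpt m, Finset.sum_add_distrib,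
        ← Finset.mul_sum, ← Finset.mul_sum, hy2, hz2]
      simp [Prod.snd_add, Prod.smul_snd, smul_eq_mul]
  have hCcone : ∀ y ∈ C, ∀ t : ℝ, 0 ≤ t → t • y ∈ C := by
    rintro y ⟨P, hPp, hy1, hy2⟩ t ht
    refine ⟨fun m => t • P m, fun m => psd_real_smul (hPp m) ht, ?_, ?_⟩
    · rw [← Finset.smul_sum, hy1]
      simp [Prod.smul_fst]
    · rw [Finset.sum_congr rfl fun m _ => retrace_mul_smul (W m) (P m) t,
        ← Finset.mul_sum, hy2]
      simp [Prod.smul_snd, smul_eq_mul]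
  have hbC : ((1 : Matrix n n ℂ), p - ε) ∉ C := by
    rintro ⟨P, hPp, h1, h2⟩
    have hmem : p - ε ∈ S := ⟨P, ⟨hPp, h1⟩, h2⟩
    have := csInf_le hSbdd hmem
    rw [← hp] at this
    linarith
  haveI : LocallyConvexSpace ℝ (Matrix n n ℂ × ℝ) :=
    inferInstanceAs (LocallyConvexSpace ℝ ((n → n → ℂ) × ℝ))
  obtain ⟨f, u, hfb, hfC⟩ := geometric_hahn_banach_point_closed hCconv hCclosed hbC
  have h00 : ((0, 0) : Matrix n n ℂ × ℝ) ∈ C :=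
    ⟨fun _ => 0, fun _ => Matrix.PosSemidef.zero, by simp, by simp⟩
  have hu0 : u < 0 := by
    have := hfC _ h00
    have hf0 : f ((0, 0) : Matrix n n ℂ × ℝ) = 0 := by
      have : ((0, 0) : Matrix n n ℂ × ℝ) = 0 := rfl
      rw [this, map_zero]
    linarith [this, hf0.symm ▸ this]
  have hfC0 : ∀ y ∈ C, 0 ≤ f y := by
    intro y hy
    by_contra hneg
    push_neg at hneg
    have ht : (0 : ℝ) < (u - 1) / f y := div_pos_of_neg_of_neg (by linarith) hneg
    have hmem := hCcone y hy _ ht.le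
    have h5 := hfC _ hmem
    rw [_root_.map_smul, smul_eq_mul, div_mul_cancel₀ _ (ne_of_lt hneg)] at h5
    linarith
  set γ : ℝ := f ((0 : Matrix n n ℂ), (1 : ℝ)) with hγdef
  have hdecomp : ∀ (Z : Matrix n n ℂ) (c : ℝ), f (Z, c) = f (Z, 0) + c * γ := by
    intro Z c
    have he : (Z, c) = (Z, 0) + c • ((0 : Matrix n n ℂ), (1 : ℝ)) := by
      simp [Prod.ext_iff]
    rw [he, map_add, _root_.map_smul, smul_eq_mul]
  have key : ∀ P : Fin R → Matrix n n ℂ, (∀ m, (P m).PosSemidef) →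
      0 ≤ f (∑ m, P m, 0) + (∑ m, ((W m * P m).trace).re) * γ := by
    intro P hPp
    have := hfC0 (∑ m, P m, ∑ m, ((W m * P m).trace).re) ⟨P, hPp, rfl, rfl⟩
    rwa [hdecomp] at this
  have hfb' : f ((1 : Matrix n n ℂ), 0) + (p - ε) * γ < u := by
    rw [← hdecomp]
    exact hfb
  have hps₀ : p ≤ s₀ := csInf_le hSbdd hs₀S
  have hγpos : 0 < γ := by
    have k0 := key P₀ hP₀psd
    rw [hP₀sum, ← hs₀] at k0
    have hd : 0 < (s₀ - (p - ε)) * γ := by nlinarith [k0, hfb', hu0]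
    rcases mul_pos_iff.mp hd with ⟨_, hγ⟩ | ⟨hneg, _⟩
    · exact hγ
    · linarith
  have key2 : ∀ (m : Fin R) (Q : Matrix n n ℂ), Q.PosSemidef →
      0 ≤ f (Q, 0) + ((W m * Q).trace).re * γ := by
    intro m Q hQ
    have hsingle : ∀ m', ((if m' = m then Q else 0) : Matrix n n ℂ).PosSemidef := by
      intro m'
      split_ifs
      · exact hQ
      · exact Matrix.PosSemidef.zero
    have hk := key (fun m' => if m' = m then Q else 0) hsingle
    have e1 : (∑ m', if m' = m then Q else (0 : Matrix n n ℂ)) = Q := by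
      simp [Finset.sum_ite_eq']
    have e2 : (∑ m', ((W m' * if m' = m then Q else 0).trace).re) = ((W m * Q).trace).re := by
      have hpt : ∀ m', ((W m' * if m' = m then Q else 0).trace).re
          = if m' = m then ((W m' * Q).trace).re else 0 := by
        intro m'
        split_ifs <;> simp
      rw [Finset.sum_congr rfl fun m' _ => hpt m']
      simp [Finset.sum_ite_eq']
    rwa [e1, e2] at hk
  -- build the dual optimal matrix
  set gL : Matrix n n ℂ →ₗ[ℝ] ℝ :=
    (f.toLinearMap).comp (LinearMap.inl ℝ (Matrix n n ℂ) ℝ) with hgL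
  obtain ⟨Y, hY⟩ := exists_rep gL
  have hg : ∀ M : Matrix n n ℂ, f (M, 0) = ((Y * M).trace).re := by
    intro M
    have := hY M
    simpa [hgL] using this
  set X₀ : Matrix n n ℂ := (-(γ⁻¹) : ℝ) • Y with hX₀
  set X : Matrix n n ℂ := (2⁻¹ : ℝ) • (X₀ + X₀ᴴ) with hX
  have hXherm : X.IsHermitian := by
    ext i j
    simp [hX, Matrix.conjTranspose_apply, Matrix.add_apply, star_add, star_smul]
    ring
  have hXQ : ∀ Q : Matrix n n ℂ, Q.IsHermitian → ((X * Q).trace).re = -(γ⁻¹ * f (Q, 0)) := by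
    intro Q hQ
    have e1 : X * Q = (2⁻¹ : ℝ) • (X₀ * Q + X₀ᴴ * Q) := by
      rw [hX, smul_mul_assoc, Matrix.add_mul]
    have e2 : ((X₀ * Q).trace).re = -(γ⁻¹ * f (Q, 0)) := by
      rw [hX₀, smul_mul_assoc, Matrix.trace_smul]
      simp [Complex.real_smul, hg Q]
      try ring
    have e3 : ((X₀ᴴ * Q).trace).re = ((X₀ * Q).trace).re := re_trace_conjTranspose_mul hQ
    rw [e1, Matrix.trace_smul]
    simp only [Complex.real_smul]
    rw [Matrix.trace_add]
    simp only [Complex.mul_re, Complex.add_re, Complex.add_im, Complex.ofReal_re,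
      Complex.ofReal_im]
    rw [e3, e2]
    ring
  have hfeas : ∀ m, (W m - X).PosSemidef := by
    intro m
    refine posSemidef_of_re_trace ((hW m).1.sub hXherm) fun B hB => ?_
    have e1 : (((W m - X) * B).trace).re = ((W m * B).trace).re - ((X * B).trace).re := by
      rw [Matrix.sub_mul, Matrix.trace_sub, Complex.sub_re]
    rw [e1, hXQ B hB.1]
    have h0 := key2 m B hB
    have h1 : 0 ≤ γ⁻¹ * (f (B, 0) + ((W m * B).trace).re * γ) :=
      mul_nonneg (by positivity) h0
    have h2 : γ⁻¹ * (f (B, 0) + ((W m * B).trace).re * γ)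
        = γ⁻¹ * f (B, 0) + ((W m * B).trace).re := by
      field_simp
    rw [h2] at h1
    linarith
  have hXT : X.trace.re ∈ T := ⟨X, ⟨hXherm, hfeas⟩, rfl⟩
  have hXval : p - ε < X.trace.re := by
    have e0 : X.trace.re = -(γ⁻¹ * f ((1 : Matrix n n ℂ), 0)) := by
      have := hXQ 1 Matrix.isHermitian_one
      rwa [mul_one] at this
    have hlt : f ((1 : Matrix n n ℂ), 0) < -((p - ε) * γ) := by linarith
    have h3 : γ⁻¹ * f ((1 : Matrix n n ℂ), 0) < γ⁻¹ * (-((p - ε) * γ)) :=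
      mul_lt_mul_of_pos_left hlt (inv_pos.mpr hγpos)
    have h4 : γ⁻¹ * (-((p - ε) * γ)) = -(p - ε) := by
      field_simp
      try ring
    rw [h4] at h3
    rw [e0]
    linarith
  have := le_csSup hTbdd hXT
  linarith

end Main

end
end
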